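/- arXiv:1304.0313 — 5 statements merged into one kernel-verified Lean document; each statement's English description precedes it below -/
import Mathlib

section
/- Let ψ: k[x_1,...,x_n] → k[x_1,...,x_m] be a k-algebra homomorphism with ψ(x_i) ≠ 0 for all i, let u ∈ Γ^m, define ψ^u by ψ^u(x_i) = ψ(x_i)^u, and let u_ψ = (deg_u ψ(x_1),...,deg_u ψ(x_n)) ∈ Γ^n. If f ∈ k[x_1,...,x_n] satisfies ψ^u(f^{u_ψ}) ≠ 0, then ψ(f)^u = ψ^u(f^{u_ψ}). -/
open MvPolynomial

/-- The `w`-weight `a·w` of an exponent vector `a`. -/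
def mwt {n : ℕ} {Γ : Type*} [AddCommGroup Γ] (w : Fin n → Γ) (a : Fin n →₀ ℕ) : Γ :=
  a.sum fun i e => e • w i

/-- The `w`-degree of a polynomial, with `deg_w 0 = ⊥`. -/
noncomputable def wdeg {k : Type*} [CommRing k] {n : ℕ} {Γ : Type*}
    [AddCommGroup Γ] [LinearOrder Γ] [IsOrderedAddMonoid Γ] (w : Fin n → Γ) (f : MvPolynomial (Fin n) k) : WithBot Γ :=
  f.support.sup fun a => ((mwt w a : Γ) : WithBot Γ)

/-- The `w`-initial form of a polynomial (`0` for the zero polynomial). -/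
noncomputable def initForm {k : Type*} [CommRing k] {n : ℕ} {Γ : Type*}
    [AddCommGroup Γ] [LinearOrder Γ] [IsOrderedAddMonoid Γ] (w : Fin n → Γ) (f : MvPolynomial (Fin n) k) :
    MvPolynomial (Fin n) k :=
  ∑ a ∈ f.support.filter (fun a => ((mwt w a : Γ) : WithBot Γ) = wdeg w f),
    monomial a (f.coeff a)

section Aux

variable {k : Type*} [CommRing k] {Γ : Type*} [AddCommGroup Γ] [LinearOrder Γ] [IsOrderedAddMonoid Γ] {N : ℕ}

lemma mwt_zero (w : Fin N → Γ) : mwt w 0 = 0 := Finsupp.sum_zero_index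

lemma mwt_add (w : Fin N → Γ) (a b : Fin N →₀ ℕ) :
    mwt w (a + b) = mwt w a + mwt w b := by
  unfold mwt
  rw [Finsupp.sum_add_index]
  · intro i _; simp
  · intro i _ e1 e2; rw [add_smul]

lemma le_wdeg (w : Fin N → Γ) {f : MvPolynomial (Fin N) k} {a : Fin N →₀ ℕ}
    (ha : f.coeff a ≠ 0) : ((mwt w a : Γ) : WithBot Γ) ≤ wdeg w f := by
  unfold wdeg
  exact Finset.le_sup (f := fun a => ((mwt w a : Γ) : WithBot Γ))
    (MvPolynomial.mem_support_iff.2 ha)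

lemma wdeg_le_iff (w : Fin N → Γ) {f : MvPolynomial (Fin N) k} {b : WithBot Γ} :
    wdeg w f ≤ b ↔ ∀ a ∈ f.support, ((mwt w a : Γ) : WithBot Γ) ≤ b := by
  unfold wdeg
  exact Finset.sup_le_iff

lemma wdeg_zero (w : Fin N → Γ) : wdeg w (0 : MvPolynomial (Fin N) k) = ⊥ := by
  simp [wdeg]

lemma exists_wdeg_eq (w : Fin N → Γ) {f : MvPolynomial (Fin N) k} (hf : f ≠ 0) :
    ∃ D : Γ, wdeg w f = (D : WithBot Γ) := by
  obtain ⟨a, _, ha⟩ := Finset.exists_mem_eq_sup f.support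
    (MvPolynomial.support_nonempty.2 hf) (fun a => ((mwt w a : Γ) : WithBot Γ))
  exact ⟨mwt w a, ha⟩

lemma coeff_initForm (w : Fin N → Γ) (f : MvPolynomial (Fin N) k) (b : Fin N →₀ ℕ) :
    (initForm w f).coeff b =
      if ((mwt w b : Γ) : WithBot Γ) = wdeg w f then f.coeff b else 0 := by
  unfold initForm
  rw [MvPolynomial.coeff_sum]
  simp only [MvPolynomial.coeff_monomial]
  rw [Finset.sum_ite_eq' (f.support.filter fun a => ((mwt w a : Γ) : WithBot Γ) = wdeg w f) b
    (fun a => f.coeff a)]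
  by_cases hb : ((mwt w b : Γ) : WithBot Γ) = wdeg w f
  · rw [if_pos hb]
    by_cases hs : b ∈ f.support
    · rw [if_pos (Finset.mem_filter.2 ⟨hs, hb⟩)]
    · rw [if_neg (fun hmem => hs (Finset.mem_filter.1 hmem).1)]
      exact (MvPolynomial.notMem_support_iff.1 hs).symm
  · have hnm : b ∉ f.support.filter (fun a => ((mwt w a : Γ) : WithBot Γ) = wdeg w f) :=
      fun hmem => hb (Finset.mem_filter.1 hmem).2
    rw [if_neg hnm, if_neg hb]

/-- `g` is `w`-homogeneous of weight `D`. -/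
def Homog (w : Fin N → Γ) (D : Γ) (g : MvPolynomial (Fin N) k) : Prop :=
  ∀ a : Fin N →₀ ℕ, mwt w a ≠ D → g.coeff a = 0

lemma homog_initForm (w : Fin N → Γ) {f : MvPolynomial (Fin N) k} {D : Γ}
    (hD : wdeg w f = (D : WithBot Γ)) : Homog w D (initForm w f) := by
  intro a hm
  rw [coeff_initForm, hD, if_neg]
  exact fun hc => hm (WithBot.coe_injective hc)

lemma initForm_ne_zero (w : Fin N → Γ) {f : MvPolynomial (Fin N) k} (hf : f ≠ 0) :
    initForm w f ≠ 0 := by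
  obtain ⟨a, ha, hsup⟩ := Finset.exists_mem_eq_sup f.support
    (MvPolynomial.support_nonempty.2 hf) (fun a => ((mwt w a : Γ) : WithBot Γ))
  intro hzero
  have hsup' : ((mwt w a : Γ) : WithBot Γ) = wdeg w f := hsup.symm
  have := coeff_initForm w f a
  rw [hzero, if_pos hsup'] at this
  exact MvPolynomial.mem_support_iff.1 ha this.symm

/-- Recognition lemma: `g` homogeneous nonzero plus lower-degree junk has initial form `g`. -/
lemma initForm_eq_of (w : Fin N → Γ) (D : Γ) {g r : MvPolynomial (Fin N) k} (hg : g ≠ 0)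
    (hgh : Homog w D g) (hr : wdeg w r < (D : WithBot Γ)) :
    initForm w (g + r) = g ∧ wdeg w (g + r) = (D : WithBot Γ) := by
  have key : ∀ a : Fin N →₀ ℕ, mwt w a = D → r.coeff a = 0 := by
    intro a ha
    by_contra hc
    exact absurd (le_wdeg w hc) (by rw [ha]; exact not_le.2 hr)
  have hwd : wdeg w (g + r) = (D : WithBot Γ) := by
    apply le_antisymm
    · rw [wdeg_le_iff]
      intro a ha
      rw [MvPolynomial.mem_support_iff, MvPolynomial.coeff_add] at ha
      by_cases hm : mwt w a = D
      · rw [hm]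
      · have hrc : r.coeff a ≠ 0 := fun h0 => ha (by rw [hgh a hm, h0, add_zero])
        exact le_trans (le_wdeg w hrc) hr.le
    · obtain ⟨a, ha⟩ := MvPolynomial.ne_zero_iff.1 hg
      have hm : mwt w a = D := by by_contra hm; exact ha (hgh a hm)
      have : (g + r).coeff a ≠ 0 := by
        rw [MvPolynomial.coeff_add, key a hm, add_zero]; exact ha
      rw [← hm]
      exact le_wdeg w this
  refine ⟨?_, hwd⟩
  ext a
  rw [coeff_initForm, hwd]
  by_cases hm : mwt w a = D
  · rw [if_pos (by rw [hm]), MvPolynomial.coeff_add, key a hm, add_zero]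
  · rw [if_neg (fun hc => hm (WithBot.coe_injective hc)), hgh a hm]

lemma initForm_of_homog (w : Fin N → Γ) (D : Γ) {g : MvPolynomial (Fin N) k} (hg : g ≠ 0)
    (hgh : Homog w D g) : initForm w g = g ∧ wdeg w g = (D : WithBot Γ) := by
  have := initForm_eq_of w D hg hgh (by rw [wdeg_zero]; exact WithBot.bot_lt_coe D)
  rwa [add_zero] at this

lemma wdeg_sub_initForm_lt (w : Fin N → Γ) {f : MvPolynomial (Fin N) k} {D : Γ}
    (hD : wdeg w f = (D : WithBot Γ)) :
    wdeg w (f - initForm w f) < (D : WithBot Γ) := by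
  have hmem : ∀ a ∈ (f - initForm w f).support, ((mwt w a : Γ) : WithBot Γ) < (D : WithBot Γ) := by
    intro a ha
    rw [MvPolynomial.mem_support_iff, MvPolynomial.coeff_sub, coeff_initForm, hD] at ha
    by_cases hc : ((mwt w a : Γ) : WithBot Γ) = (D : WithBot Γ)
    · rw [if_pos hc, sub_self] at ha; exact absurd rfl ha
    · rw [if_neg hc, sub_zero] at ha
      exact lt_of_le_of_ne (hD ▸ le_wdeg w ha) hc
  unfold wdeg
  exact (Finset.sup_lt_iff (WithBot.bot_lt_coe D)).2 hmem

lemma wdeg_sum_le {ι : Type*} (w : Fin N → Γ) (s : Finset ι)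
    (q : ι → MvPolynomial (Fin N) k) :
    wdeg w (∑ i ∈ s, q i) ≤ s.sup fun i => wdeg w (q i) := by
  rw [wdeg_le_iff]
  intro a ha
  rw [MvPolynomial.mem_support_iff, MvPolynomial.coeff_sum] at ha
  obtain ⟨i, hi, hqi⟩ := Finset.exists_ne_zero_of_sum_ne_zero ha
  exact le_trans (le_wdeg w hqi) (Finset.le_sup (f := fun i => wdeg w (q i)) hi)

lemma wdeg_add_le (w : Fin N → Γ) (p q : MvPolynomial (Fin N) k) :
    wdeg w (p + q) ≤ max (wdeg w p) (wdeg w q) := by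
  rw [wdeg_le_iff]
  intro a ha
  rw [MvPolynomial.mem_support_iff, MvPolynomial.coeff_add] at ha
  by_cases hp : p.coeff a ≠ 0
  · exact le_trans (le_wdeg w hp) (le_max_left _ _)
  · push_neg at hp
    have hq : q.coeff a ≠ 0 := fun h0 => ha (by rw [hp, h0, add_zero])
    exact le_trans (le_wdeg w hq) (le_max_right _ _)

lemma homog_mul (w : Fin N → Γ) {D E : Γ} {p q : MvPolynomial (Fin N) k}
    (hp : Homog w D p) (hq : Homog w E q) : Homog w (D + E) (p * q) := by
  intro a hm
  rw [MvPolynomial.coeff_mul]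
  apply Finset.sum_eq_zero
  intro x hx
  by_cases h1 : mwt w x.1 = D
  · by_cases h2 : mwt w x.2 = E
    · exact absurd (by rw [← Finset.HasAntidiagonal.mem_antidiagonal.1 hx, mwt_add, h1, h2]) hm
    · rw [hq _ h2, mul_zero]
  · rw [hp _ h1, zero_mul]

lemma homog_sum (w : Fin N → Γ) {D : Γ} {ι : Type*} {s : Finset ι}
    {q : ι → MvPolynomial (Fin N) k} (hq : ∀ i ∈ s, Homog w D (q i)) :
    Homog w D (∑ i ∈ s, q i) := by
  intro a hm
  rw [MvPolynomial.coeff_sum]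
  exact Finset.sum_eq_zero fun i hi => hq i hi a hm

lemma wdeg_mul_le (w : Fin N → Γ) (p q : MvPolynomial (Fin N) k) :
    wdeg w (p * q) ≤ wdeg w p + wdeg w q := by
  rw [wdeg_le_iff]
  intro a ha
  rw [MvPolynomial.mem_support_iff, MvPolynomial.coeff_mul] at ha
  obtain ⟨x, hx, hxne⟩ := Finset.exists_ne_zero_of_sum_ne_zero ha
  have h1 : p.coeff x.1 ≠ 0 := fun h0 => hxne (by rw [h0, zero_mul])
  have h2 : q.coeff x.2 ≠ 0 := fun h0 => hxne (by rw [h0, mul_zero])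
  rw [← Finset.HasAntidiagonal.mem_antidiagonal.1 hx, mwt_add, WithBot.coe_add]
  exact add_le_add (le_wdeg w h1) (le_wdeg w h2)

lemma wb_add_lt_of_lt_of_le {x y : WithBot Γ} {c d : Γ}
    (hx : x < (c : WithBot Γ)) (hy : y ≤ (d : WithBot Γ)) :
    x + y < ((c + d : Γ) : WithBot Γ) := by
  cases x with
  | bot => rw [WithBot.bot_add]; exact WithBot.bot_lt_coe _
  | coe x =>
    cases y with
    | bot => rw [WithBot.add_bot]; exact WithBot.bot_lt_coe _
    | coe y =>
      rw [← WithBot.coe_add, WithBot.coe_lt_coe]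
      exact add_lt_add_of_lt_of_le (WithBot.coe_lt_coe.1 hx) (WithBot.coe_le_coe.1 hy)

lemma wb_add_lt_of_le_of_lt {x y : WithBot Γ} {c d : Γ}
    (hx : x ≤ (c : WithBot Γ)) (hy : y < (d : WithBot Γ)) :
    x + y < ((c + d : Γ) : WithBot Γ) := by
  rw [add_comm x y, add_comm c d]
  exact wb_add_lt_of_lt_of_le hy hx

variable [IsDomain k]

lemma initForm_mul (w : Fin N → Γ) {p q : MvPolynomial (Fin N) k} (hp : p ≠ 0) (hq : q ≠ 0)
    {dp dq : Γ} (hdp : wdeg w p = (dp : WithBot Γ)) (hdq : wdeg w q = (dq : WithBot Γ)) :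
    initForm w (p * q) = initForm w p * initForm w q ∧
      wdeg w (p * q) = ((dp + dq : Γ) : WithBot Γ) := by
  have hP := initForm_ne_zero w hp
  have hQ := initForm_ne_zero w hq
  have hPQ : initForm w p * initForm w q ≠ 0 := mul_ne_zero hP hQ
  have hh : Homog w (dp + dq) (initForm w p * initForm w q) :=
    homog_mul w (homog_initForm w hdp) (homog_initForm w hdq)
  have hrest : wdeg w (p * q - initForm w p * initForm w q) < ((dp + dq : Γ) : WithBot Γ) := by
    have hsplit : p * q - initForm w p * initForm w q =
        (p - initForm w p) * q + initForm w p * (q - initForm w q) := by ring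
    rw [hsplit]
    have h1 : wdeg w ((p - initForm w p) * q) < ((dp + dq : Γ) : WithBot Γ) :=
      lt_of_le_of_lt (wdeg_mul_le w _ _)
        (wb_add_lt_of_lt_of_le (wdeg_sub_initForm_lt w hdp) hdq.le)
    have h2 : wdeg w (initForm w p * (q - initForm w q)) < ((dp + dq : Γ) : WithBot Γ) := by
      refine lt_of_le_of_lt (wdeg_mul_le w _ _)
        (wb_add_lt_of_le_of_lt ?_ (wdeg_sub_initForm_lt w hdq))
      exact (initForm_of_homog w dp hP (homog_initForm w hdp)).2.le
    exact lt_of_le_of_lt (wdeg_add_le w _ _) (max_lt h1 h2)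
  have := initForm_eq_of w (dp + dq) hPQ hh hrest
  rwa [add_sub_cancel] at this

lemma initForm_pow (w : Fin N → Γ) {p : MvPolynomial (Fin N) k} (hp : p ≠ 0)
    {d : Γ} (hd : wdeg w p = (d : WithBot Γ)) (e : ℕ) :
    p ^ e ≠ 0 ∧ initForm w (p ^ e) = initForm w p ^ e ∧
      wdeg w (p ^ e) = ((e • d : Γ) : WithBot Γ) := by
  induction e with
  | zero =>
    refine ⟨one_ne_zero, ?_, ?_⟩
    · rw [pow_zero, pow_zero]
      refine (initForm_of_homog w 0 one_ne_zero ?_).1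
      intro a ha
      rw [MvPolynomial.coeff_one, if_neg]
      intro h0
      exact ha (by rw [← h0, mwt_zero])
    · rw [pow_zero, zero_smul]
      refine (initForm_of_homog w 0 one_ne_zero ?_).2
      intro a ha
      rw [MvPolynomial.coeff_one, if_neg]
      intro h0
      exact ha (by rw [← h0, mwt_zero])
  | succ e ih =>
    obtain ⟨hne, hinit, hwd⟩ := ih
    have hmul := initForm_mul w hne hp hwd hd
    refine ⟨mul_ne_zero hne hp, ?_, ?_⟩
    · rw [pow_succ, pow_succ, ← hinit]
      exact hmul.1
    · rw [pow_succ, hmul.2, succ_nsmul]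

lemma initForm_prod {ι : Type*} (w : Fin N → Γ) (s : Finset ι)
    (p : ι → MvPolynomial (Fin N) k) (d : ι → Γ) (hp : ∀ i ∈ s, p i ≠ 0)
    (hd : ∀ i ∈ s, wdeg w (p i) = ((d i : Γ) : WithBot Γ)) :
    (∏ i ∈ s, p i) ≠ 0 ∧ initForm w (∏ i ∈ s, p i) = ∏ i ∈ s, initForm w (p i) ∧
      wdeg w (∏ i ∈ s, p i) = ((∑ i ∈ s, d i : Γ) : WithBot Γ) := by
  classical
  induction s using Finset.induction_on with
  | empty =>
    simp only [Finset.prod_empty, Finset.sum_empty]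
    have h1 : Homog w 0 (1 : MvPolynomial (Fin N) k) := by
      intro a ha
      rw [MvPolynomial.coeff_one, if_neg]
      intro h0
      exact ha (by rw [← h0, mwt_zero])
    exact ⟨one_ne_zero, (initForm_of_homog w 0 one_ne_zero h1).1,
      (initForm_of_homog w 0 one_ne_zero h1).2⟩
  | @insert i s' hni ih =>
    obtain ⟨hne, hinit, hwd⟩ := ih (fun j hj => hp j (Finset.mem_insert_of_mem hj))
      (fun j hj => hd j (Finset.mem_insert_of_mem hj))
    have hpi := hp i (Finset.mem_insert_self i s')
    have hdi := hd i (Finset.mem_insert_self i s')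
    rw [Finset.prod_insert hni, Finset.prod_insert hni, Finset.sum_insert hni]
    have hmul := initForm_mul w hpi hne hdi hwd
    exact ⟨mul_ne_zero hpi hne, by rw [hmul.1, hinit], hmul.2⟩

lemma initForm_C_mul (w : Fin N → Γ) {c : k} (hc : c ≠ 0) (p : MvPolynomial (Fin N) k) :
    wdeg w (C c * p) = wdeg w p ∧ initForm w (C c * p) = C c * initForm w p := by
  have hsupp : (C c * p).support = p.support := by
    ext a
    simp [MvPolynomial.mem_support_iff, MvPolynomial.coeff_C_mul, hc]
  have hwd : wdeg w (C c * p) = wdeg w p := by unfold wdeg; rw [hsupp]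
  refine ⟨hwd, ?_⟩
  ext a
  rw [coeff_initForm, hwd, MvPolynomial.coeff_C_mul, MvPolynomial.coeff_C_mul, coeff_initForm,
    mul_ite, mul_zero]

end Aux

section Key

variable {k Γ : Type*} [CommRing k] [IsDomain k] [AddCommGroup Γ] [LinearOrder Γ] [IsOrderedAddMonoid Γ] {n m : ℕ}

lemma key_monomial (ψ : MvPolynomial (Fin n) k →ₐ[k] MvPolynomial (Fin m) k)
    (hψ : ∀ i, ψ (X i) ≠ 0) (u : Fin m → Γ) (uψ : Fin n → Γ)
    (huψ : ∀ i, (uψ i : WithBot Γ) = wdeg u (ψ (X i)))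
    (a : Fin n →₀ ℕ) {c : k} (hc : c ≠ 0) :
    ψ (monomial a c) ≠ 0 ∧ wdeg u (ψ (monomial a c)) = ((mwt uψ a : Γ) : WithBot Γ) ∧
      initForm u (ψ (monomial a c)) =
        aeval (fun i => initForm u (ψ (X i))) (monomial a c) := by
  have hC : ψ (C c) = C c := by
    rw [← MvPolynomial.algebraMap_eq]
    exact ψ.commutes c
  have hmon : ψ (monomial a c) = C c * ∏ i ∈ a.support, ψ (X i) ^ a i := by
    rw [monomial_eq, map_mul, hC]
    congr 1
    rw [Finsupp.prod, map_prod]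
    exact Finset.prod_congr rfl fun i _ => map_pow ψ (X i) (a i)
  have hpow : ∀ i ∈ a.support, (ψ (X i)) ^ a i ≠ 0 ∧
      initForm u (ψ (X i) ^ a i) = initForm u (ψ (X i)) ^ a i ∧
      wdeg u (ψ (X i) ^ a i) = ((a i • uψ i : Γ) : WithBot Γ) :=
    fun i _ => initForm_pow u (hψ i) (huψ i).symm (a i)
  have hprod := initForm_prod u a.support (fun i => ψ (X i) ^ a i) (fun i => a i • uψ i)
    (fun i hi => (hpow i hi).1) (fun i hi => (hpow i hi).2.2)
  beta_reduce at hprod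
  have hCmul := initForm_C_mul u hc (∏ i ∈ a.support, ψ (X i) ^ a i)
  have hwsum : (∑ i ∈ a.support, a i • uψ i) = mwt uψ a := rfl
  refine ⟨?_, ?_, ?_⟩
  · rw [hmon]
    have hCc : (C c : MvPolynomial (Fin m) k) ≠ 0 := fun h0 =>
      hc (MvPolynomial.C_injective (Fin m) k (by rw [h0, map_zero]))
    exact mul_ne_zero hCc hprod.1
  · rw [hmon, hCmul.1, hprod.2.2, hwsum]
  · rw [hmon, hCmul.2, hprod.2.1, aeval_monomial]
    congr 1
    rw [Finsupp.prod]
    exact Finset.prod_congr rfl fun i hi => (hpow i hi).2.1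

lemma wdeg_psi_le (ψ : MvPolynomial (Fin n) k →ₐ[k] MvPolynomial (Fin m) k)
    (hψ : ∀ i, ψ (X i) ≠ 0) (u : Fin m → Γ) (uψ : Fin n → Γ)
    (huψ : ∀ i, (uψ i : WithBot Γ) = wdeg u (ψ (X i)))
    (p : MvPolynomial (Fin n) k) : wdeg u (ψ p) ≤ wdeg uψ p := by
  conv_lhs => rw [p.as_sum, map_sum]
  refine le_trans (wdeg_sum_le u p.support _) (Finset.sup_le ?_)
  intro a ha
  rw [(key_monomial ψ hψ u uψ huψ a (MvPolynomial.mem_support_iff.1 ha)).2.1]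
  exact le_wdeg uψ (MvPolynomial.mem_support_iff.1 ha)

end Key

/-- If `ψ^u(f^{u_ψ}) ≠ 0` then `ψ(f)^u = ψ^u(f^{u_ψ})`. -/
theorem initForm_comp {k Γ : Type*} [CommRing k] [IsDomain k]
    [AddCommGroup Γ] [LinearOrder Γ] [IsOrderedAddMonoid Γ] {n m : ℕ} (hnm : n ≤ m)
    (ψ : MvPolynomial (Fin n) k →ₐ[k] MvPolynomial (Fin m) k)
    (hψ : ∀ i, ψ (X i) ≠ 0) (u : Fin m → Γ) (uψ : Fin n → Γ)
    (huψ : ∀ i, (uψ i : WithBot Γ) = wdeg u (ψ (X i)))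
    (f : MvPolynomial (Fin n) k)
    (h : aeval (fun i => initForm u (ψ (X i))) (initForm uψ f) ≠ 0) :
    initForm u (ψ f) = aeval (fun i => initForm u (ψ (X i))) (initForm uψ f) := by
  set IF : Fin n → MvPolynomial (Fin m) k := fun i => initForm u (ψ (X i)) with hIF
  have hf : f ≠ 0 := by
    rintro rfl
    apply h
    simp [initForm]
  obtain ⟨D, hD⟩ := exists_wdeg_eq uψ hf
  set F := initForm uψ f with hF
  have hFhom : Homog uψ D F := homog_initForm uψ hD
  have hFsupp : ∀ a ∈ F.support, mwt uψ a = D := by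
    intro a ha
    by_contra hm
    exact MvPolynomial.mem_support_iff.1 ha (hFhom a hm)
  have hFc : ∀ a ∈ F.support, F.coeff a ≠ 0 := fun a ha => MvPolynomial.mem_support_iff.1 ha
  -- the key monomial facts for each a ∈ F.support
  have hkey : ∀ a ∈ F.support,
      ψ (monomial a (F.coeff a)) ≠ 0 ∧
      wdeg u (ψ (monomial a (F.coeff a))) = ((mwt uψ a : Γ) : WithBot Γ) ∧
      initForm u (ψ (monomial a (F.coeff a))) = aeval IF (monomial a (F.coeff a)) :=
    fun a ha => key_monomial ψ hψ u uψ huψ a (hFc a ha)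
  -- g = aeval IF F is homogeneous of weight D
  have hgsum : aeval IF F = ∑ a ∈ F.support, aeval IF (monomial a (F.coeff a)) := by
    conv_lhs => rw [F.as_sum, map_sum]
  have hgh : Homog u D (aeval IF F) := by
    rw [hgsum]
    refine homog_sum u fun a ha => ?_
    rw [← (hkey a ha).2.2]
    have hw : wdeg u (ψ (monomial a (F.coeff a))) = (D : WithBot Γ) := by
      rw [(hkey a ha).2.1, hFsupp a ha]
    exact homog_initForm u hw
  -- wdeg of the remainder is < D
  have hr : wdeg u (ψ f - aeval IF F) < (D : WithBot Γ) := by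
    have hsplit : ψ f - aeval IF F =
        (∑ a ∈ F.support, (ψ (monomial a (F.coeff a)) - aeval IF (monomial a (F.coeff a)))) +
          ψ (f - F) := by
      rw [Finset.sum_sub_distrib, map_sub]
      have hpsiF : ψ F = ∑ a ∈ F.support, ψ (monomial a (F.coeff a)) := by
        conv_lhs => rw [F.as_sum, map_sum]
      rw [← hpsiF, ← hgsum]
      ring
    rw [hsplit]
    have h1 : wdeg u (∑ a ∈ F.support,
        (ψ (monomial a (F.coeff a)) - aeval IF (monomial a (F.coeff a)))) < (D : WithBot Γ) := by
      refine lt_of_le_of_lt (wdeg_sum_le u F.support _)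
        ((Finset.sup_lt_iff (WithBot.bot_lt_coe D)).2 ?_)
      intro a ha
      rw [← (hkey a ha).2.2]
      have hw : wdeg u (ψ (monomial a (F.coeff a))) = (D : WithBot Γ) := by
        rw [(hkey a ha).2.1, hFsupp a ha]
      exact wdeg_sub_initForm_lt u hw
    have h2 : wdeg u (ψ (f - F)) < (D : WithBot Γ) :=
      lt_of_le_of_lt (wdeg_psi_le ψ hψ u uψ huψ (f - F)) (wdeg_sub_initForm_lt uψ hD)
    exact lt_of_le_of_lt (wdeg_add_le u _ _) (max_lt h1 h2)
  have hmain := (initForm_eq_of u D h hgh hr).1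
  have heq : aeval IF F + (ψ f - aeval IF F) = ψ f := by ring
  rwa [heq] at hmain
end

section
/- Let ψ: k[x_1,...,x_n] → k[x_1,...,x_m] be a k-algebra homomorphism with ψ(x_i) ≠ 0 for all i, u ∈ Γ^m, and u_ψ = (deg_u ψ(x_1),...,deg_u ψ(x_n)). Fix 1 ≤ l ≤ m and let k[x]^ψ = ψ^{-1}(k[x_1,...,x_l]) and k[x]^{ψ^u} = (ψ^u)^{-1}(k[x_1,...,x_l]). Then for every f ∈ k[x]^ψ, the initial form f^{u_ψ} belongs to k[x]^{ψ^u}. -/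
open MvPolynomial

namespace InitAux

open Finsupp

variable {R : Type*} [CommRing R] {Γ : Type*} [AddCommGroup Γ] [LinearOrder Γ] [IsOrderedAddMonoid Γ]

lemma top_apply_mul (p q : AddMonoidAlgebra R Γ) (a b : Γ)
    (hp : ∀ c ∈ p.coeff.support, c ≤ a) (hq : ∀ c ∈ q.coeff.support, c ≤ b) :
    (p * q).coeff (a + b) = p.coeff a * q.coeff b := by
  classical
  rw [AddMonoidAlgebra.coeff_mul, Finsupp.sum, Finset.sum_eq_single a]
  · rw [Finsupp.sum, Finset.sum_eq_single b]
    · simp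
    · intro a₂ h2 hne
      rw [if_neg]
      intro he
      exact (add_lt_add_right ((hq a₂ h2).lt_of_ne hne) a).ne he
    · intro h
      simp [Finsupp.notMem_support_iff.1 h]
  · intro a₁ h1 hne
    apply Finset.sum_eq_zero
    intro a₂ h2
    dsimp only
    rw [if_neg]
    intro he
    exact (add_lt_add_of_lt_of_le ((hp a₁ h1).lt_of_ne hne) (hq a₂ h2)).ne he
  · intro h
    simp [Finsupp.notMem_support_iff.1 h]

lemma top_support_mul (p q : AddMonoidAlgebra R Γ) (a b : Γ)
    (hp : ∀ c ∈ p.coeff.support, c ≤ a) (hq : ∀ c ∈ q.coeff.support, c ≤ b) :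
    ∀ c ∈ (p * q).coeff.support, c ≤ a + b := by
  classical
  intro c hc
  obtain ⟨x, hx, y, hy, rfl⟩ := Finset.mem_add.1 (AddMonoidAlgebra.support_coeff_mul_subset p q hc)
  exact add_le_add (hp x hx) (hq y hy)

lemma top_pow (p : AddMonoidAlgebra R Γ) (d : Γ) (h : ∀ γ ∈ p.coeff.support, γ ≤ d) (e : ℕ) :
    (∀ γ ∈ (p ^ e).coeff.support, γ ≤ e • d) ∧ (p ^ e).coeff (e • d) = (p.coeff d) ^ e := by
  induction e with
  | zero =>
    constructor
    · intro γ hγ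
      rw [pow_zero, AddMonoidAlgebra.one_def] at hγ
      have := Finsupp.support_single_subset hγ
      simp only [Finset.mem_singleton] at this
      simp [this]
    · rw [pow_zero, zero_smul, AddMonoidAlgebra.one_def, pow_zero, AddMonoidAlgebra.coeff_single, Finsupp.single_apply]
      simp
  | succ e ih =>
    constructor
    · rw [pow_succ, succ_nsmul]
      exact top_support_mul _ _ _ _ ih.1 h
    · rw [pow_succ, succ_nsmul, top_apply_mul _ _ _ _ ih.1 h, ih.2, pow_succ]

lemma top_prod {ι : Type*} (s : Finset ι) (p : ι → AddMonoidAlgebra R Γ) (d : ι → Γ)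
    (e : ι → ℕ) (h : ∀ i ∈ s, ∀ γ ∈ (p i).coeff.support, γ ≤ d i) :
    (∀ γ ∈ (∏ i ∈ s, p i ^ e i).coeff.support, γ ≤ ∑ i ∈ s, e i • d i) ∧
    (∏ i ∈ s, p i ^ e i).coeff (∑ i ∈ s, e i • d i) = ∏ i ∈ s, ((p i).coeff (d i)) ^ e i := by
  classical
  revert h
  induction s using Finset.cons_induction with
  | empty =>
    intro _
    constructor
    · intro γ hγ
      rw [Finset.prod_empty, AddMonoidAlgebra.one_def] at hγ
      have := Finsupp.support_single_subset hγ
      simp only [Finset.mem_singleton] at this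
      simp [this]
    · rw [Finset.prod_empty, Finset.sum_empty, AddMonoidAlgebra.one_def,
        AddMonoidAlgebra.coeff_single, Finsupp.single_apply, Finset.prod_empty]
      simp
  | cons i s his ih =>
    intro h
    have ih' := ih (fun j hj => h j (Finset.mem_cons.2 (Or.inr hj)))
    have hpi := top_pow (p i) (d i) (h i (Finset.mem_cons_self i s)) (e i)
    constructor
    · rw [Finset.prod_cons, Finset.sum_cons]
      exact top_support_mul _ _ _ _ hpi.1 ih'.1
    · rw [Finset.prod_cons, Finset.sum_cons, top_apply_mul _ _ _ _ hpi.1 ih'.1, hpi.2, ih'.2,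
        Finset.prod_cons]

section Phi

variable {k : Type*} [CommRing k] {Γ : Type*} [AddCommGroup Γ] [LinearOrder Γ] [IsOrderedAddMonoid Γ] {m : ℕ} (u : Fin m → Γ)

noncomputable def Phi : MvPolynomial (Fin m) k →ₐ[k] AddMonoidAlgebra (MvPolynomial (Fin m) k) Γ :=
  aeval fun i => AddMonoidAlgebra.single (u i) (X i)

lemma Phi_monomial (a : Fin m →₀ ℕ) (c : k) :
    Phi u (monomial a c) = AddMonoidAlgebra.single (mwt u a) (monomial a c) := by
  rw [Phi, aeval_monomial]
  have h1 : (a.prod fun i e =>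
        (AddMonoidAlgebra.single (u i) (X i) : AddMonoidAlgebra (MvPolynomial (Fin m) k) Γ) ^ e)
      = AddMonoidAlgebra.single (mwt u a) (monomial a (1 : k)) := by
    rw [Finsupp.prod]
    have : ∀ i ∈ a.support,
        (AddMonoidAlgebra.single (u i) (X i) : AddMonoidAlgebra (MvPolynomial (Fin m) k) Γ) ^ (a i)
        = AddMonoidAlgebra.single ((a i) • u i) ((X i : MvPolynomial (Fin m) k) ^ (a i)) := fun i _ =>
      AddMonoidAlgebra.single_pow _ _ _
    rw [Finset.prod_congr rfl this, AddMonoidAlgebra.prod_single]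
    have hm : mwt u a = ∑ i ∈ a.support, a i • u i := by rw [mwt, Finsupp.sum]
    have hmon : (monomial a (1 : k) : MvPolynomial (Fin m) k)
        = ∏ i ∈ a.support, (X i : MvPolynomial (Fin m) k) ^ a i := by
      rw [monomial_eq, C_1, one_mul, Finsupp.prod]
    rw [hm, hmon]
  rw [h1, AddMonoidAlgebra.coe_algebraMap, Function.comp_apply]
  rw [AddMonoidAlgebra.single_mul_single, zero_add]
  congr 1
  rw [MvPolynomial.algebraMap_eq, C_mul_monomial, mul_one]

lemma Phi_apply (g : MvPolynomial (Fin m) k) (γ : Γ) :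
    (Phi u g).coeff γ
      = ∑ a ∈ g.support.filter (fun a => mwt u a = γ), monomial a (g.coeff a) := by
  classical
  conv_lhs => rw [g.as_sum, map_sum]
  rw [AddMonoidAlgebra.coeff_sum, Finsupp.finset_sum_apply, Finset.sum_filter]
  apply Finset.sum_congr rfl
  intro a _
  rw [Phi_monomial, AddMonoidAlgebra.coeff_single, Finsupp.single_apply]

lemma Phi_support (g : MvPolynomial (Fin m) k) (γ : Γ) (h : γ ∈ (Phi u g).coeff.support) :
    ∃ a ∈ g.support, mwt u a = γ := by
  classical
  by_contra hcon
  push_neg at hcon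
  have h0 : (Phi u g).coeff γ = 0 := by
    rw [Phi_apply]
    apply Finset.sum_eq_zero
    intro a ha
    rw [Finset.mem_filter] at ha
    exact absurd ha.2 (hcon a ha.1)
  exact Finsupp.mem_support_iff.1 h h0

end Phi

end InitAux

/-- If `f ∈ ψ⁻¹(k[x_1,…,x_l])` then `f^{u_ψ} ∈ (ψ^u)⁻¹(k[x_1,…,x_l])`. -/
theorem initForm_mem_preimage {k Γ : Type*} [CommRing k] [IsDomain k]
    [AddCommGroup Γ] [LinearOrder Γ] [IsOrderedAddMonoid Γ] {n m l : ℕ} (hnm : n ≤ m) (hl1 : 1 ≤ l) (hlm : l ≤ m)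
    (ψ : MvPolynomial (Fin n) k →ₐ[k] MvPolynomial (Fin m) k)
    (hψ : ∀ i, ψ (X i) ≠ 0) (u : Fin m → Γ) (uψ : Fin n → Γ)
    (huψ : ∀ i, (uψ i : WithBot Γ) = wdeg u (ψ (X i)))
    (f : MvPolynomial (Fin n) k)
    (hf : ψ f ∈ supported k {i : Fin m | (i : ℕ) < l}) :
    aeval (fun i => initForm u (ψ (X i))) (initForm uψ f)
      ∈ supported k {i : Fin m | (i : ℕ) < l} := by
  classical
  by_cases hf0 : f = 0
  · subst hf0
    have h0 : initForm uψ (0 : MvPolynomial (Fin n) k) = 0 := by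
      simp [initForm]
    rw [h0, map_zero]
    exact Subalgebra.zero_mem _
  obtain ⟨a₀, ha₀, hδ⟩ := Finset.exists_mem_eq_sup f.support
      (by rwa [Finset.nonempty_iff_ne_empty, Ne, MvPolynomial.support_eq_empty])
      (fun a => ((mwt uψ a : Γ) : WithBot Γ))
  set δ : Γ := mwt uψ a₀ with hδdef
  have hwdeg : wdeg uψ f = (δ : WithBot Γ) := hδ
  -- generator facts
  have gb : ∀ i : Fin n, ∀ γ ∈ (InitAux.Phi u (ψ (X i))).coeff.support, γ ≤ uψ i := by
    intro i γ hγ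
    obtain ⟨a, ha, rfl⟩ := InitAux.Phi_support u _ _ hγ
    have h1 : ((mwt u a : Γ) : WithBot Γ) ≤ wdeg u (ψ (X i)) := by
      unfold wdeg; exact Finset.le_sup (f := fun a => ((mwt u a : Γ) : WithBot Γ)) ha
    rw [← huψ i] at h1
    exact_mod_cast h1
  have gv : ∀ i : Fin n, (InitAux.Phi u (ψ (X i))).coeff (uψ i) = initForm u (ψ (X i)) := by
    intro i
    rw [InitAux.Phi_apply, initForm]
    apply Finset.sum_congr _ (fun _ _ => rfl)
    apply Finset.filter_congr
    intro a _
    rw [← huψ i]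
    simp only [WithBot.coe_eq_coe]
  -- key per-monomial facts
  have key : ∀ a : Fin n →₀ ℕ, ∀ c : k,
      (∀ γ ∈ (InitAux.Phi u (ψ (monomial a c))).coeff.support, γ ≤ mwt uψ a) ∧
      (InitAux.Phi u (ψ (monomial a c))).coeff (mwt uψ a)
        = aeval (fun i => initForm u (ψ (X i))) (monomial a c) := by
    intro a c
    have hdec : ψ (monomial a c)
        = algebraMap k (MvPolynomial (Fin m) k) c * ∏ i ∈ a.support, (ψ (X i)) ^ a i := by
      rw [monomial_eq, Finsupp.prod, map_mul, map_prod]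
      simp only [map_pow]
      congr 1
      rw [← MvPolynomial.algebraMap_eq, ψ.commutes]
    have hprod := InitAux.top_prod a.support (fun i => InitAux.Phi u (ψ (X i))) uψ
      (fun i => a i) (fun i _ => gb i)
    have hsum : (∑ i ∈ a.support, a i • uψ i) = mwt uψ a := by rw [mwt, Finsupp.sum]
    have hmap : InitAux.Phi u (ψ (monomial a c))
        = AddMonoidAlgebra.single 0 (C c : MvPolynomial (Fin m) k)
            * ∏ i ∈ a.support, (InitAux.Phi u (ψ (X i))) ^ a i := by
      rw [hdec, map_mul, map_prod]
      simp only [map_pow]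
      congr 1
      rw [AlgHom.commutes, AddMonoidAlgebra.coe_algebraMap, Function.comp_apply,
        MvPolynomial.algebraMap_eq]
    have hsb : ∀ γ ∈ (AddMonoidAlgebra.single 0 (C c : MvPolynomial (Fin m) k)
        : AddMonoidAlgebra (MvPolynomial (Fin m) k) Γ).coeff.support, γ ≤ (0 : Γ) := by
      intro γ hγ
      have := Finsupp.support_single_subset hγ
      simp only [Finset.mem_singleton] at this
      simp [this]
    constructor
    · intro γ hγ
      rw [hmap] at hγ
      have := InitAux.top_support_mul _ _ 0 (∑ i ∈ a.support, a i • uψ i) hsb hprod.1 γ hγ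
      rwa [zero_add, hsum] at this
    · rw [hmap, ← hsum, ← zero_add (∑ i ∈ a.support, a i • uψ i),
        InitAux.top_apply_mul _ _ _ _ hsb hprod.1, hprod.2]
      rw [AddMonoidAlgebra.coeff_single, Finsupp.single_apply, if_pos rfl, aeval_monomial]
      congr 1
      simp only [Finsupp.prod]
      exact Finset.prod_congr rfl fun i _ => by rw [gv i]
  -- the main identity
  have hzero : ∀ a ∈ f.support, a ∉ (f.support.filter fun a => mwt uψ a = δ) →
      (InitAux.Phi u (ψ (monomial a (f.coeff a)))).coeff δ = 0 := by
    intro a ha hna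
    rw [Finset.mem_filter, not_and] at hna
    have hne : mwt uψ a ≠ δ := hna ha
    have hle : ((mwt uψ a : Γ) : WithBot Γ) ≤ (δ : WithBot Γ) := by
      rw [← hwdeg]; unfold wdeg
      exact Finset.le_sup (f := fun b => ((mwt uψ b : Γ) : WithBot Γ)) ha
    have hlt : mwt uψ a < δ := lt_of_le_of_ne (by exact_mod_cast hle) hne
    exact Finsupp.notMem_support_iff.1
      (fun hmem => (((key a (f.coeff a)).1 δ hmem).not_gt hlt))
  have hmain : aeval (fun i => initForm u (ψ (X i))) (initForm uψ f)
      = (InitAux.Phi u (ψ f)).coeff δ := by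
    rw [initForm]
    have hfil : (f.support.filter fun a => ((mwt uψ a : Γ) : WithBot Γ) = wdeg uψ f)
        = f.support.filter fun a => mwt uψ a = δ := by
      apply Finset.filter_congr
      intro a _
      rw [hwdeg]
      simp only [WithBot.coe_eq_coe]
    have hterm : ∀ a ∈ f.support.filter fun a => mwt uψ a = δ,
        aeval (fun i => initForm u (ψ (X i))) (monomial a (f.coeff a))
          = (InitAux.Phi u (ψ (monomial a (f.coeff a)))).coeff δ := by
      intro a ha
      rw [Finset.mem_filter] at ha
      rw [← (key a (f.coeff a)).2, ha.2]
    rw [hfil, map_sum, Finset.sum_congr rfl hterm,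
      Finset.sum_subset (Finset.filter_subset _ _) hzero]
    conv_rhs => rw [f.as_sum]
    rw [map_sum, map_sum, AddMonoidAlgebra.coeff_sum, Finsupp.finset_sum_apply]
  rw [hmain, InitAux.Phi_apply]
  apply Subalgebra.sum_mem
  intro b hb
  rw [Finset.mem_filter] at hb
  rw [monomial_eq]
  apply Subalgebra.mul_mem
  · rw [← MvPolynomial.algebraMap_eq]
    exact Subalgebra.algebraMap_mem _ _
  · rw [Finsupp.prod]
    apply Subalgebra.prod_mem
    intro j hj
    apply Subalgebra.pow_mem
    rw [MvPolynomial.X_mem_supported]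
    exact (MvPolynomial.mem_supported.1 hf) ((MvPolynomial.mem_vars j).2 ⟨b, hb.1, hj⟩)
end

section
/- No stable G_a-invariant of k[x_1,...,x_n] has an intruder; i.e., if f is a stable G_a-invariant, then no vertex (i_1,...,i_n) of the Newton polytope of f satisfies i_l ≠ 0 for all l. -/
set_option maxHeartbeats 1000000

open MvPolynomial

/-- `σ` is a `G_a`-action on `k[x_1,…,x_m]`: a `k`-algebra homomorphism to the
polynomial ring in `z` satisfying the counit axiom (`π ∘ σ = id`) and the
coassociativity axiom with respect to the comultiplication `z ↦ z⊗1 + 1⊗z`. -/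
def IsGaAction {k : Type*} [CommRing k] {m : ℕ}
    (σ : MvPolynomial (Fin m) k →ₐ[k] Polynomial (MvPolynomial (Fin m) k)) : Prop :=
  (∀ f, Polynomial.eval 0 (σ f) = f) ∧
  (∀ f, Polynomial.eval₂ (Polynomial.C.comp σ.toRingHom) Polynomial.X (σ f)
      = Polynomial.eval₂ (Polynomial.C.comp Polynomial.C)
          (Polynomial.C Polynomial.X + Polynomial.X) (σ f))

/-- `f ∈ k[x_1,…,x_n]` is a stable `G_a`-invariant: for some `m ≥ n` there is a
`G_a`-action on `k[x_1,…,x_m]` whose invariant ring contains `f` but does not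
contain `k[x_1,…,x_n]`. -/
def IsStableGaInvariant {k : Type*} [CommRing k] {n : ℕ}
    (f : MvPolynomial (Fin n) k) : Prop :=
  ∃ (m : ℕ) (h : n ≤ m)
    (σ : MvPolynomial (Fin m) k →ₐ[k] Polynomial (MvPolynomial (Fin m) k)),
    IsGaAction σ ∧
    σ (rename (Fin.castLE h) f) ∈ Set.range Polynomial.C ∧
    ¬ ∀ g : MvPolynomial (Fin n) k,
        σ (rename (Fin.castLE h) g) ∈ Set.range Polynomial.C


open MvPolynomial

namespace StableAux

/-- Weight of an exponent vector, as a Fintype sum. -/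
def wtF {M : ℕ} (u : Fin M → ℝ) (μ : Fin M →₀ ℕ) : ℝ := ∑ i, (μ i : ℝ) * u i

lemma wtF_add {M : ℕ} (u : Fin M → ℝ) (μ ν : Fin M →₀ ℕ) :
    wtF u (μ + ν) = wtF u μ + wtF u ν := by
  simp [wtF, add_mul, Finset.sum_add_distrib]

lemma wtF_cases {M : ℕ} (y : ℝ) (ww : Fin M → ℝ) (μ : Fin (M+1) →₀ ℕ) :
    wtF (Fin.cases y ww) μ = (μ 0 : ℝ) * y + ∑ i : Fin M, (μ i.succ : ℝ) * ww i := by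
  rw [wtF, Fin.sum_univ_succ]; simp

section SDeg

variable {k : Type*} [CommRing k] [IsDomain k] {τ : Type*} [DecidableEq τ] {B₀ : Type*}
  [AddCommMonoid B₀] [LinearOrder B₀] [IsOrderedCancelAddMonoid B₀]
set_option linter.unusedSectionVars false

/-- sup-degree of a multivariate polynomial with respect to a degree map `D`. -/
noncomputable def sdeg (D : (τ →₀ ℕ) → B₀) (p : MvPolynomial τ k) : WithBot B₀ :=
  p.support.sup fun μ => ((D μ : B₀) : WithBot B₀)

variable {D : (τ →₀ ℕ) → B₀}

lemma sdeg_zero : sdeg D (0 : MvPolynomial τ k) = ⊥ := by simp [sdeg]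

lemma le_sdeg {p : MvPolynomial τ k} {μ} (h : μ ∈ p.support) :
    ((D μ : B₀) : WithBot B₀) ≤ sdeg D p :=
  Finset.le_sup (f := fun μ => ((D μ : B₀) : WithBot B₀)) h

lemma sdeg_exists {p : MvPolynomial τ k} (hp : p ≠ 0) :
    ∃ M ∈ p.support, sdeg D p = (D M : WithBot B₀) ∧ ∀ μ ∈ p.support, D μ ≤ D M := by
  obtain ⟨M, hM, hE⟩ := Finset.exists_mem_eq_sup p.support
    (Finset.nonempty_iff_ne_empty.2 (mt MvPolynomial.support_eq_empty.1 hp)) (fun μ => ((D μ : B₀) : WithBot B₀))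
  refine ⟨M, hM, hE, fun μ hμ => ?_⟩
  have := Finset.le_sup (f := fun μ => ((D μ : B₀) : WithBot B₀)) hμ
  rw [hE, WithBot.coe_le_coe] at this
  exact this

lemma sdeg_monomial {μ : τ →₀ ℕ} {c : k} (hc : c ≠ 0) :
    sdeg D (monomial μ c) = (D μ : WithBot B₀) := by
  classical
  rw [sdeg, support_monomial, if_neg hc, Finset.sup_singleton]

lemma sdeg_mul (hDinj : Function.Injective D)
    (hadd : ∀ x y, D (x + y) = D x + D y)
    {p q : MvPolynomial τ k} (hp : p ≠ 0) (hq : q ≠ 0) :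
    p * q ≠ 0 ∧ sdeg D (p * q) = sdeg D p + sdeg D q := by
  obtain ⟨Mp, hMp, hEp, hmaxp⟩ := sdeg_exists (D := D) hp
  obtain ⟨Mq, hMq, hEq, hmaxq⟩ := sdeg_exists (D := D) hq
  have hcoeff : coeff (Mp + Mq) (p * q) = coeff Mp p * coeff Mq q := by
    rw [coeff_mul]
    refine Finset.sum_eq_single (Mp, Mq) ?_ ?_
    · rintro ⟨x, y⟩ hxy hne
      rw [Finset.HasAntidiagonal.mem_antidiagonal] at hxy
      by_contra hc0
      have hx : x ∈ p.support := by
        rw [mem_support_iff]; intro h0; exact hc0 (by simp [h0])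
      have hy : y ∈ q.support := by
        rw [mem_support_iff]; intro h0; exact hc0 (by simp [h0])
      have hsum : D x + D y = D Mp + D Mq := by rw [← hadd, ← hadd, hxy]
      have hxMp : D x = D Mp := by
        by_contra hne'
        have : D x < D Mp := lt_of_le_of_ne (hmaxp x hx) (fun e => hne' e)
        exact absurd hsum (ne_of_lt (add_lt_add_of_lt_of_le this (hmaxq y hy)))
      rw [hxMp] at hsum
      have hy' : y = Mq := hDinj (add_left_cancel hsum)
      have hx' : x = Mp := hDinj hxMp
      exact hne (by rw [hx', hy'])
    · intro hnm
      simp only [Finset.HasAntidiagonal.mem_antidiagonal] at hnm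
      exact absurd trivial hnm
  have hc_ne : coeff Mp p * coeff Mq q ≠ 0 :=
    mul_ne_zero (mem_support_iff.1 hMp) (mem_support_iff.1 hMq)
  have hne : p * q ≠ 0 := mul_ne_zero hp hq
  refine ⟨hne, le_antisymm ?_ ?_⟩
  · rw [sdeg, hEp, hEq, ← WithBot.coe_add]
    apply Finset.sup_le
    intro ν hν
    have hcn := mem_support_iff.1 hν
    rw [coeff_mul] at hcn
    obtain ⟨⟨x, y⟩, hxy, hval⟩ := Finset.exists_ne_zero_of_sum_ne_zero hcn
    rw [Finset.HasAntidiagonal.mem_antidiagonal] at hxy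
    have hx : x ∈ p.support := mem_support_iff.2 fun h0 => hval (by simp [h0])
    have hy : y ∈ q.support := mem_support_iff.2 fun h0 => hval (by simp [h0])
    rw [WithBot.coe_le_coe, ← hxy, hadd]
    exact add_le_add (hmaxp x hx) (hmaxq y hy)
  · rw [hEp, hEq, ← WithBot.coe_add, ← hadd]
    exact le_sdeg (mem_support_iff.2 (hcoeff ▸ hc_ne))

lemma sdeg_pow (hDinj : Function.Injective D)
    (hadd : ∀ x y, D (x + y) = D x + D y)
    {p : MvPolynomial τ k} (hp : p ≠ 0) {d : B₀} (hd : sdeg D p = (d : WithBot B₀)) (e : ℕ) :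
    p ^ e ≠ 0 ∧ sdeg D (p ^ e) = ((e • d : B₀) : WithBot B₀) := by
  have hD0 : D 0 = 0 := by
    have := hadd 0 0
    rw [add_zero] at this
    exact left_eq_add.mp this
  induction e with
  | zero =>
      refine ⟨by simp [one_ne_zero], ?_⟩
      have h1 : (1 : MvPolynomial τ k) = monomial 0 1 := by simp
      rw [pow_zero, h1, sdeg_monomial one_ne_zero, hD0, zero_smul]
  | succ e ih =>
      obtain ⟨hne, hsd⟩ := ih
      obtain ⟨hne', hsd'⟩ := sdeg_mul hDinj hadd hne hp
      rw [pow_succ]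
      refine ⟨hne', ?_⟩
      rw [hsd', hsd, hd, succ_nsmul, WithBot.coe_add]

lemma sdeg_prod (hDinj : Function.Injective D)
    (hadd : ∀ x y, D (x + y) = D x + D y)
    {ι : Type*} (s : Finset ι) (F : ι → MvPolynomial τ k) (d : ι → B₀)
    (h : ∀ i ∈ s, F i ≠ 0 ∧ sdeg D (F i) = ((d i : B₀) : WithBot B₀)) :
    (∏ i ∈ s, F i) ≠ 0 ∧ sdeg D (∏ i ∈ s, F i) = ((∑ i ∈ s, d i : B₀) : WithBot B₀) := by
  classical
  induction s using Finset.induction_on with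
  | empty =>
      have hD0 : D 0 = 0 := by
        have := hadd 0 0
        rw [add_zero] at this
        exact left_eq_add.mp this
      refine ⟨by simp [one_ne_zero], ?_⟩
      have h1 : (1 : MvPolynomial τ k) = monomial 0 1 := by simp
      rw [Finset.prod_empty, Finset.sum_empty, h1, sdeg_monomial one_ne_zero, hD0]
  | @insert a s' hx ih =>
      obtain ⟨hne, hsd⟩ := ih fun i hi => h i (Finset.mem_insert_of_mem hi)
      obtain ⟨ha, hda⟩ := h a (Finset.mem_insert_self a s')
      obtain ⟨hne', hsd'⟩ := sdeg_mul hDinj hadd ha hne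
      rw [Finset.prod_insert hx, Finset.sum_insert hx]
      exact ⟨hne', by rw [hsd', hsd, hda, WithBot.coe_add]⟩

lemma sdeg_sum_eq {ι : Type*} {s : Finset ι} {F : ι → MvPolynomial τ k} {i : ι}
    (hi : i ∈ s) (hFi : F i ≠ 0)
    (hlt : ∀ j ∈ s, j ≠ i → sdeg D (F j) < sdeg D (F i)) :
    sdeg D (∑ j ∈ s, F j) = sdeg D (F i) := by
  classical
  obtain ⟨M, hM, hE, hmax⟩ := sdeg_exists (D := D) hFi
  have hcoeffM : coeff M (∑ j ∈ s, F j) = coeff M (F i) := by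
    rw [coeff_sum]
    refine Finset.sum_eq_single i (fun j hj hne => ?_) (fun h => absurd hi h)
    by_contra hc
    have : ((D M : B₀) : WithBot B₀) ≤ sdeg D (F j) := le_sdeg (mem_support_iff.2 hc)
    rw [hE] at hlt
    exact absurd (lt_of_le_of_lt this (hlt j hj hne)) (lt_irrefl _)
  apply le_antisymm
  · rw [hE]
    apply Finset.sup_le
    intro ν hν
    have hcn := mem_support_iff.1 hν
    rw [coeff_sum] at hcn
    obtain ⟨j, hj, hval⟩ := Finset.exists_ne_zero_of_sum_ne_zero hcn
    have hνj : ((D ν : B₀) : WithBot B₀) ≤ sdeg D (F j) := le_sdeg (mem_support_iff.2 hval)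
    rcases eq_or_ne j i with rfl | hne
    · rw [hE] at hνj; exact hνj
    · exact le_of_lt (lt_of_le_of_lt hνj (by rw [← hE]; exact hlt j hj hne))
  · rw [hE]
    exact le_sdeg (mem_support_iff.2 (by rw [hcoeffM]; exact mem_support_iff.1 hM))

end SDeg



/-- first component additive hom -/
def fstH (M : ℕ) : (ℝ ×ₗ Lex (Fin M →₀ ℕ)) →+ ℝ where
  toFun x := (ofLex x).1
  map_zero' := rfl
  map_add' _ _ := rfl

/-- z-exponent additive hom -/
def ev0H (M : ℕ) : (ℝ ×ₗ Lex (Fin (M+1) →₀ ℕ)) →+ ℕ where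
  toFun x := (ofLex ((ofLex x).2)) 0
  map_zero' := rfl
  map_add' _ _ := rfl

variable {k : Type*} [CommRing k]

/-- coefficient of the inverse of finSuccEquiv -/
lemma coeff_symm_finSuccEquiv {m : ℕ} (p : Polynomial (MvPolynomial (Fin m) k))
    (μ : Fin (m+1) →₀ ℕ) :
    coeff μ ((finSuccEquiv k m).symm p) = coeff (Finsupp.tail μ) (p.coeff (μ 0)) := by
  have h := finSuccEquiv_coeff_coeff (Finsupp.tail μ)
    ((finSuccEquiv k m).symm p : MvPolynomial (Fin (m+1)) k) (μ 0)
  rw [AlgEquiv.apply_symm_apply] at h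
  rw [h, Finsupp.cons_tail]

lemma expand_invariant {n m : ℕ} (h : n ≤ m)
    (σ : MvPolynomial (Fin m) k →ₐ[k] Polynomial (MvPolynomial (Fin m) k))
    (f : MvPolynomial (Fin n) k) :
    (finSuccEquiv k m).symm (σ (rename (Fin.castLE h) f))
      = ∑ b ∈ f.support, C (coeff b f) *
          ∏ l, ((finSuccEquiv k m).symm (σ (X (Fin.castLE h l)))) ^ (b l) := by
  have hA : ((finSuccEquiv k m).symm.toAlgHom.comp σ).comp (rename (Fin.castLE h))
      = aeval (fun l => (finSuccEquiv k m).symm (σ (X (Fin.castLE h l)))) := by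
    apply MvPolynomial.algHom_ext
    intro l
    simp
  have hB : (finSuccEquiv k m).symm (σ (rename (Fin.castLE h) f))
      = ((finSuccEquiv k m).symm.toAlgHom.comp σ).comp (rename (Fin.castLE h)) f := rfl
  rw [hB, hA, aeval_def, eval₂_eq']
  simp [algebraMap_eq]

theorem geom_step {n : ℕ}
    (f : MvPolynomial (Fin n) k)
    (v : Fin n → ℝ)
    (hv : v ∈ Set.extremePoints ℝ (convexHull ℝ
      ((fun a : Fin n →₀ ℕ => fun i => (a i : ℝ)) '' ↑f.support))) :
    ∃ a ∈ f.support, (v = fun i => (a i : ℝ)) ∧ ∃ w : Fin n → ℝ,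
      ∀ b ∈ f.support, b ≠ a → (∑ l, (b l : ℝ) * w l) < ∑ l, (a l : ℝ) * w l := by
  classical
  set S : Set (Fin n → ℝ) := (fun a : Fin n →₀ ℕ => fun i => (a i : ℝ)) '' ↑f.support with hS
  have hvS : v ∈ S := extremePoints_convexHull_subset hv
  obtain ⟨a, haf, hva⟩ := hvS
  refine ⟨a, haf, hva.symm, ?_⟩
  have hconv := ((convex_convexHull ℝ S).mem_extremePoints_iff_convex_diff).1 hv
  have hsub : convexHull ℝ (S \ {v}) ⊆ convexHull ℝ S \ {v} :=
    convexHull_min (Set.diff_subset_diff_left (subset_convexHull ℝ S)) hconv.2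
  have hvnot : v ∉ convexHull ℝ (S \ {v}) := fun hmem => (hsub hmem).2 rfl
  have hfin : (S \ {v}).Finite := (f.support.finite_toSet.image _).diff
  have hcomp : IsCompact (convexHull ℝ (S \ {v})) := hfin.isCompact_convexHull ℝ
  obtain ⟨ℓ, u, hu, hvu⟩ := geometric_hahn_banach_closed_point
    (convex_convexHull ℝ (S \ {v})) hcomp.isClosed hvnot
  refine ⟨fun l => ℓ (fun j => if l = j then 1 else 0), fun b hb hne => ?_⟩
  have hℓ : ∀ x : Fin n → ℝ, ℓ x = ∑ l, x l * ℓ (fun j => if l = j then 1 else 0) := by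
    intro x
    have := LinearMap.pi_apply_eq_sum_univ (ℓ : (Fin n → ℝ) →ₗ[ℝ] ℝ) x
    simpa [smul_eq_mul] using this
  have hbS : (fun i => (b i : ℝ)) ∈ S \ {v} := by
    refine ⟨⟨b, hb, rfl⟩, ?_⟩
    simp only [Set.mem_singleton_iff]
    intro hbv
    apply hne
    ext i
    have := congrFun (hbv.trans hva.symm) i
    simpa using this
  have h1 : ℓ (fun i => (b i : ℝ)) < u := hu _ (subset_convexHull ℝ _ hbS)
  have h2 : u < ℓ v := hvu
  rw [hℓ] at h1 h2
  rw [← hva] at h2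
  simp only []
  calc (∑ l, (b l : ℝ) * ℓ (fun j => if l = j then 1 else 0)) < u := h1
    _ < _ := by simpa using h2


variable [IsDomain k]

theorem key_alg {n : ℕ} (f : MvPolynomial (Fin n) k)
    (hf : IsStableGaInvariant f) (a : Fin n →₀ ℕ) (haf : a ∈ f.support)
    (hall : ∀ l, a l ≠ 0) (w : Fin n → ℝ)
    (hw : ∀ b ∈ f.support, b ≠ a → (∑ l, (b l : ℝ) * w l) < ∑ l, (a l : ℝ) * w l) :
    False := by
  classical
  obtain ⟨m, h, σ, ⟨hσ1, -⟩, hinv, hns⟩ := hf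
  set q : Fin m → MvPolynomial (Fin (m+1)) k :=
    fun i => (finSuccEquiv k m).symm (σ (X i)) with hq
  have hq_coeff : ∀ (i : Fin m) (μ : Fin (m+1) →₀ ℕ),
      coeff μ (q i) = coeff (Finsupp.tail μ) ((σ (X i)).coeff (μ 0)) :=
    fun i μ => coeff_symm_finSuccEquiv (σ (X i)) μ
  have hcoeff0 : ∀ g : MvPolynomial (Fin m) k, (σ g).coeff 0 = g := by
    intro g; rw [Polynomial.coeff_zero_eq_eval_zero]; exact hσ1 g
  set mustar : Fin m → (Fin (m+1) →₀ ℕ) := fun i => Finsupp.cons 0 (Finsupp.single i 1)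
    with hmustar
  have hmu0 : ∀ i, (mustar i) 0 = 0 := fun i => Finsupp.cons_zero _ _
  have hmutail : ∀ i, Finsupp.tail (mustar i) = Finsupp.single i 1 :=
    fun i => Finsupp.tail_cons _ _
  have hmustar_coeff : ∀ i, coeff (mustar i) (q i) = 1 := by
    intro i
    rw [hq_coeff, hmu0, hcoeff0, hmutail]
    simp [coeff_X']
  have hq_ne : ∀ i, q i ≠ 0 := by
    intro i h0
    have := hmustar_coeff i
    rw [h0] at this
    simp at this
  have hzero_char : ∀ (i : Fin m) μ, μ ∈ (q i).support → μ 0 = 0 → μ = mustar i := by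
    intro i μ hμ h0
    have hc := MvPolynomial.mem_support_iff.1 hμ
    rw [hq_coeff, h0, hcoeff0] at hc
    rw [coeff_X'] at hc
    have hts : Finsupp.single i 1 = Finsupp.tail μ := by
      by_contra hne
      rw [if_neg hne] at hc
      exact hc rfl
    rw [← Finsupp.cons_tail μ, h0, ← hts]
  have hFC : σ (rename (Fin.castLE h) f) = Polynomial.C (rename (Fin.castLE h) f) := by
    obtain ⟨g, hg⟩ := hinv
    have h1 := hσ1 (rename (Fin.castLE h) f)
    rw [← hg, Polynomial.eval_C] at h1
    rw [← hg, h1]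
  set G : MvPolynomial (Fin (m+1)) k := (finSuccEquiv k m).symm (σ (rename (Fin.castLE h) f))
    with hGdef
  have hGzfree : ∀ μ ∈ G.support, μ 0 = 0 := by
    intro μ hμ
    by_contra h0
    have hc := MvPolynomial.mem_support_iff.1 hμ
    rw [hGdef, coeff_symm_finSuccEquiv, hFC, Polynomial.coeff_C, if_neg h0] at hc
    simp at hc
  set w' : Fin m → ℝ := fun i => if hi : (i : ℕ) < n then w ⟨(i : ℕ), hi⟩ else 0 with hw'def
  have hw'c : ∀ l : Fin n, w' (Fin.castLE h l) = w l := by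
    intro l
    rw [hw'def]
    simp only []
    rw [dif_pos (show ((Fin.castLE h l : Fin m) : ℕ) < n from l.isLt)]
    exact congrArg w (Fin.ext rfl)
  set u0 : Fin (m+1) → ℝ := Fin.cases 0 w' with hu0
  set V : Finset ℝ := Finset.univ.biUnion (fun l : Fin n =>
    (((q (Fin.castLE h l)).support.filter (fun μ => μ 0 ≠ 0)).image
      (fun μ => (w l - wtF u0 μ) / (μ 0 : ℝ)))) with hV
  by_cases hVne : V.Nonempty
  · -- main case
    set lam : ℝ := V.min' hVne with hlam
    set u : Fin (m+1) → ℝ := Fin.cases lam w' with hu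
    have hu_mu : ∀ μ : Fin (m+1) →₀ ℕ, wtF u μ = (μ 0 : ℝ) * lam + wtF u0 μ := by
      intro μ
      rw [hu, hu0, wtF_cases, wtF_cases]
      ring
    have hlam_le : ∀ (l : Fin n) μ, μ ∈ (q (Fin.castLE h l)).support → μ 0 ≠ 0 →
        wtF u μ ≤ w l := by
      intro l μ hμ h0
      have hmem : (w l - wtF u0 μ) / (μ 0 : ℝ) ∈ V := by
        rw [hV]
        exact Finset.mem_biUnion.2 ⟨l, Finset.mem_univ l,
          Finset.mem_image.2 ⟨μ, Finset.mem_filter.2 ⟨hμ, h0⟩, rfl⟩⟩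
      have hmin := V.min'_le _ hmem
      rw [← hlam] at hmin
      have hpos : (0 : ℝ) < ((μ 0 : ℕ) : ℝ) := by
        exact_mod_cast Nat.pos_of_ne_zero h0
      rw [le_div_iff₀ hpos] at hmin
      have := hu_mu μ
      nlinarith
    have hlam_ex : ∃ l₀ : Fin n, ∃ μ₀, μ₀ ∈ (q (Fin.castLE h l₀)).support ∧ μ₀ 0 ≠ 0 ∧
        wtF u μ₀ = w l₀ := by
      have hmem := V.min'_mem hVne
      obtain ⟨l₀, -, hmem⟩ := Finset.mem_biUnion.1 hmem
      obtain ⟨μ₀, hμ₀, heq⟩ := Finset.mem_image.1 hmem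
      obtain ⟨hμmem, hμ0⟩ := Finset.mem_filter.1 hμ₀
      refine ⟨l₀, μ₀, hμmem, hμ0, ?_⟩
      have hpos : (0 : ℝ) < ((μ₀ 0 : ℕ) : ℝ) := by exact_mod_cast Nat.pos_of_ne_zero hμ0
      rw [div_eq_iff (ne_of_gt hpos)] at heq
      rw [← hlam] at heq
      have := hu_mu μ₀
      nlinarith
    set D : (Fin (m+1) →₀ ℕ) → ℝ ×ₗ Lex (Fin (m+1) →₀ ℕ) :=
      fun μ => toLex (wtF u μ, toLex μ) with hD
    have hDadd : ∀ x y, D (x + y) = D x + D y := by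
      intro x y
      rw [hD]
      simp only [wtF_add]
      rfl
    have hDinj : Function.Injective D := by
      intro x y hxy
      exact congrArg (fun z : ℝ ×ₗ Lex (Fin (m+1) →₀ ℕ) => ofLex ((ofLex z).2)) hxy
    have hD0 : D 0 = 0 := by
      have := hDadd 0 0
      rw [add_zero] at this
      exact left_eq_add.mp this
    have hfstD : ∀ μ, fstH (m+1) (D μ) = wtF u μ := fun μ => rfl
    have hev0D : ∀ μ, ev0H m (D μ) = μ 0 := fun μ => rfl
    have hwtmustar : ∀ i, wtF u (mustar i) = w' i := by
      intro i
      rw [hu, hmustar]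
      simp only []
      rw [wtF_cases]
      simp [Finsupp.cons_succ, Finsupp.single_apply]
    have hL : ∀ l : Fin n, ∃ L, L ∈ (q (Fin.castLE h l)).support ∧
        sdeg D (q (Fin.castLE h l)) = (D L : WithBot (ℝ ×ₗ Lex (Fin (m+1) →₀ ℕ))) ∧
        (∀ μ ∈ (q (Fin.castLE h l)).support, D μ ≤ D L) ∧ wtF u L = w l := by
      intro l
      obtain ⟨L, hL1, hL2, hL3⟩ := sdeg_exists (D := D) (hq_ne (Fin.castLE h l))
      refine ⟨L, hL1, hL2, hL3, ?_⟩
      have hup : wtF u L ≤ w l := by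
        by_cases h0 : L 0 = 0
        · rw [hzero_char _ L hL1 h0, hwtmustar, hw'c]
        · exact hlam_le l L hL1 h0
      have hdown : w l ≤ wtF u L := by
        have hmem : mustar (Fin.castLE h l) ∈ (q (Fin.castLE h l)).support :=
          MvPolynomial.mem_support_iff.2 (by rw [hmustar_coeff]; exact one_ne_zero)
        have hle := hL3 _ hmem
        have hfst : wtF u (mustar (Fin.castLE h l)) ≤ wtF u L :=
          Prod.Lex.monotone_fst _ _ hle
        rw [hwtmustar, hw'c] at hfst
        exact hfst
      linarith
    choose L hL1 hL2 hL3 hL4 using hL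
    have hG : G = ∑ b ∈ f.support, C (coeff b f) * ∏ l, (q (Fin.castLE h l)) ^ (b l) := by
      rw [hGdef]
      exact expand_invariant h σ f
    have hterm : ∀ b ∈ f.support,
        (C (coeff b f) * ∏ l, (q (Fin.castLE h l)) ^ (b l)) ≠ 0 ∧
        sdeg D (C (coeff b f) * ∏ l, (q (Fin.castLE h l)) ^ (b l)) =
          ((∑ l, (b l) • D (L l) : ℝ ×ₗ Lex (Fin (m+1) →₀ ℕ)) : WithBot _) := by
      intro b hb
      have hprod := sdeg_prod hDinj hDadd Finset.univ (fun l => q (Fin.castLE h l) ^ b l)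
        (fun l => (b l) • D (L l))
        (fun l _ => sdeg_pow hDinj hDadd (hq_ne _) (hL2 l) (b l))
      have hcne : coeff b f ≠ 0 := MvPolynomial.mem_support_iff.1 hb
      have hCne : (C (coeff b f) : MvPolynomial (Fin (m+1)) k) ≠ 0 := by
        simpa using hcne
      obtain ⟨hmulne, hmuleq⟩ := sdeg_mul hDinj hDadd hCne hprod.1
      refine ⟨hmulne, ?_⟩
      rw [hmuleq, hprod.2]
      have hsC : sdeg D (C (coeff b f) : MvPolynomial (Fin (m+1)) k)
          = (D 0 : WithBot (ℝ ×ₗ Lex (Fin (m+1) →₀ ℕ))) := by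
        rw [MvPolynomial.C_apply, sdeg_monomial hcne]
      rw [hsC, hD0, ← WithBot.coe_add, zero_add]
    have hfstsum : ∀ b : Fin n →₀ ℕ,
        fstH (m+1) (∑ l, (b l) • D (L l)) = ∑ l, (b l : ℝ) * w l := by
      intro b
      rw [map_sum]
      refine Finset.sum_congr rfl fun l _ => ?_
      rw [map_nsmul, nsmul_eq_mul]
      have : fstH (m+1) (D (L l)) = wtF u (L l) := rfl
      rw [this, hL4]
    have hlt : ∀ b ∈ f.support, b ≠ a →
        (∑ l, (b l) • D (L l)) < (∑ l, (a l) • D (L l)) := by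
      intro b hb hne
      have hfst : fstH (m+1) (∑ l, (b l) • D (L l)) < fstH (m+1) (∑ l, (a l) • D (L l)) := by
        rw [hfstsum, hfstsum]
        exact hw b hb hne
      have := (Prod.Lex.toLex_lt_toLex (x := ofLex (∑ l, (b l) • D (L l)))
        (y := ofLex (∑ l, (a l) • D (L l)))).2 (Or.inl hfst)
      simpa using this
    have hsum_lt : ∀ j ∈ f.support, j ≠ a →
        sdeg D (C (coeff j f) * ∏ l, (q (Fin.castLE h l)) ^ (j l)) <
        sdeg D (C (coeff a f) * ∏ l, (q (Fin.castLE h l)) ^ (a l)) := by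
      intro j hj hne
      rw [(hterm j hj).2, (hterm a haf).2, WithBot.coe_lt_coe]
      exact hlt j hj hne
    have hsdegG : sdeg D G
        = ((∑ l, (a l) • D (L l) : ℝ ×ₗ Lex (Fin (m+1) →₀ ℕ)) : WithBot _) := by
      rw [hG, sdeg_sum_eq haf (hterm a haf).1 hsum_lt]
      exact (hterm a haf).2
    have hGne : G ≠ 0 := by
      intro h0
      rw [h0, sdeg_zero] at hsdegG
      exact absurd hsdegG.symm WithBot.coe_ne_bot
    obtain ⟨Mg, hMg, hEg, -⟩ := sdeg_exists (D := D) hGne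
    have hDM : D Mg = ∑ l, (a l) • D (L l) := by
      rw [hEg] at hsdegG
      exact_mod_cast hsdegG
    have hz : ∀ l, (L l) 0 = 0 := by
      have hM0 : Mg 0 = 0 := hGzfree Mg hMg
      have hsum : ∑ l, (a l) * ((L l) 0) = 0 := by
        have heq : (∑ l, (a l) * ((L l) 0)) = ev0H m (∑ l, (a l) • D (L l)) := by
          rw [map_sum]
          refine Finset.sum_congr rfl fun l _ => ?_
          rw [map_nsmul, hev0D, smul_eq_mul]
        rw [heq, ← hDM, hev0D, hM0]
      intro l
      have := (Finset.sum_eq_zero_iff).1 hsum l (Finset.mem_univ l)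
      rcases Nat.mul_eq_zero.1 this with h1 | h2
      · exact absurd h1 (hall l)
      · exact h2
    obtain ⟨l₀, μ₀, hμmem, hμ0, hμwt⟩ := hlam_ex
    have h1 : D μ₀ ≤ D (L l₀) := hL3 l₀ μ₀ hμmem
    have h2 : toLex μ₀ ≤ toLex (L l₀) := by
      rcases (Prod.Lex.toLex_le_toLex (x := (wtF u μ₀, toLex μ₀)) (y := (wtF u (L l₀), toLex (L l₀)))).1
        (by exact h1) with hcase | hcase
      · rw [hμwt] at hcase
        rw [hL4 l₀] at hcase
        exact absurd hcase (lt_irrefl _)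
      · exact hcase.2
    have h3 : toLex (L l₀) < toLex μ₀ := by
      refine Finsupp.Lex.lt_iff.2 ⟨0, ?_, ?_⟩
      · intro j hj; exact absurd hj (by simp)
      · show (L l₀) 0 < μ₀ 0
        rw [hz l₀]
        exact Nat.pos_of_ne_zero hμ0
    exact absurd (lt_of_le_of_lt h2 h3) (lt_irrefl _)
  · -- trivial case
    rw [Finset.not_nonempty_iff_eq_empty] at hVne
    have hqz : ∀ (l : Fin n) μ, μ ∈ (q (Fin.castLE h l)).support → μ 0 = 0 := by
      intro l μ hμ
      by_contra h0
      have hmem : (w l - wtF u0 μ) / (μ 0 : ℝ) ∈ V :=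
        Finset.mem_biUnion.2 ⟨l, Finset.mem_univ l,
          Finset.mem_image.2 ⟨μ, Finset.mem_filter.2 ⟨hμ, h0⟩, rfl⟩⟩
      rw [hVne] at hmem
      exact absurd hmem (Finset.notMem_empty _)
    have hqeq : ∀ l : Fin n, σ (X (Fin.castLE h l)) = Polynomial.C (X (Fin.castLE h l)) := by
      intro l
      apply (finSuccEquiv k m).symm.injective
      apply MvPolynomial.ext
      intro μ
      by_cases h0 : μ 0 = 0
      · rw [coeff_symm_finSuccEquiv, coeff_symm_finSuccEquiv, h0, hcoeff0,
          Polynomial.coeff_C_zero]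
      · have hleft : coeff μ ((finSuccEquiv k m).symm (σ (X (Fin.castLE h l)))) = 0 := by
          rw [← MvPolynomial.notMem_support_iff]
          intro hmem
          exact h0 (hqz l μ hmem)
        rw [hleft, coeff_symm_finSuccEquiv, Polynomial.coeff_C, if_neg h0]
        simp
    apply hns
    intro g
    induction g using MvPolynomial.induction_on with
    | C c =>
        refine ⟨C c, ?_⟩
        rw [rename_C, ← MvPolynomial.algebraMap_eq, AlgHom.commutes,
          Polynomial.algebraMap_apply, MvPolynomial.algebraMap_eq]
    | add p r hp hr =>
        obtain ⟨cp, hcp⟩ := hp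
        obtain ⟨cr, hcr⟩ := hr
        exact ⟨cp + cr, by rw [map_add, map_add, map_add, hcp, hcr]⟩
    | mul_X p l hp =>
        obtain ⟨cp, hcp⟩ := hp
        refine ⟨cp * X (Fin.castLE h l), ?_⟩
        rw [map_mul, map_mul, map_mul, rename_X, hqeq l, hcp]

end StableAux

/-- Theorem 1.1: no stable `G_a`-invariant has an intruder, i.e. every vertex of the
Newton polytope of a stable `G_a`-invariant has some vanishing coordinate. -/
theorem stableInvariant_no_intruder {k : Type*} [CommRing k] [IsDomain k] {n : ℕ}
    (f : MvPolynomial (Fin n) k) (hf : IsStableGaInvariant f)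
    (v : Fin n → ℝ)
    (hv : v ∈ Set.extremePoints ℝ (convexHull ℝ
      ((fun a : Fin n →₀ ℕ => fun i => (a i : ℝ)) '' ↑f.support))) :
    ∃ l, v l = 0 := by
  by_contra hcon
  push_neg at hcon
  obtain ⟨a, haf, hva, w, hw⟩ := StableAux.geom_step f v hv
  have hall : ∀ l, a l ≠ 0 := by
    intro l h0
    apply hcon l
    rw [hva]
    simp [h0]
  exact StableAux.key_alg f hf a haf hall w hw
end

section
/- Let f_1,...,f_m generate k[x_1,...,x_m] as a k-algebra, i.e. k[f_1,...,f_m] = k[x_1,...,x_m], where k is a field of characteristic zero. Then the k-algebra endomorphism σ of k[x_1,...,x_m][z]-type defined by f_1 ↦ f_1 + z and f_i ↦ f_i for i ≥ 2 is a G_a-action on k[x_1,...,x_m] whose ring of invariants is exactly k[f_2,...,f_m]. -/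
open MvPolynomial

lemma surj_endo_inj {R : Type*} [CommRing R] [IsNoetherianRing R] (φ : R →+* R)
    (hs : Function.Surjective φ) : Function.Injective φ := by
  have hpow : ∀ (q : ℕ) (x : R), (φ ^ (q + 1)) x = φ ((φ ^ q) x) := by
    intro q x
    simp only [RingHom.coe_pow, Function.iterate_succ_apply']
  have hmono : Monotone fun n : ℕ => RingHom.ker (φ ^ n) := by
    refine monotone_nat_of_le_succ fun n a ha => ?_
    rw [RingHom.mem_ker] at ha ⊢
    rw [hpow, ha, map_zero]
  obtain ⟨n, hn⟩ := (monotone_stabilizes_iff_noetherian.2 inferInstance)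
    ⟨fun n : ℕ => RingHom.ker (φ ^ n), hmono⟩
  have hsn : ∀ q : ℕ, Function.Surjective (φ ^ q) := by
    intro q
    induction q with
    | zero => simpa using Function.surjective_id
    | succ q ih =>
      intro x
      obtain ⟨y, hy⟩ := hs x
      obtain ⟨z, hz⟩ := ih y
      exact ⟨z, by rw [hpow, hz, hy]⟩
  rw [injective_iff_map_eq_zero]
  intro a ha
  obtain ⟨b, hb⟩ := hsn n a
  have hb2 : b ∈ RingHom.ker (φ ^ (n + 1)) := by
    rw [RingHom.mem_ker, hpow, hb, ha]
  have hker : b ∈ RingHom.ker (φ ^ n) := by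
    have h2 : RingHom.ker (φ ^ n) = RingHom.ker (φ ^ (n + 1)) := hn (n + 1) (Nat.le_succ n)
    rw [h2]; exact hb2
  rw [RingHom.mem_ker] at hker
  rw [← hb, hker]

lemma algHom_ext_of_gen {k : Type*} [CommSemiring k] {R B : Type*} [CommSemiring R]
    [Semiring B] [Algebra k R] [Algebra k B] {s : Set R} (hgen : Algebra.adjoin k s = ⊤)
    {φ ψ : R →ₐ[k] B} (h : Set.EqOn φ ψ s) : φ = ψ := by
  have hle : Algebra.adjoin k s ≤ AlgHom.equalizer φ ψ := Algebra.adjoin_le h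
  ext p
  exact hle (by rw [hgen]; trivial)


/-- If `k[f_1,…,f_m] = k[x_1,…,x_m]` over a field `k` of characteristic zero, then
the `k`-algebra homomorphism `σ` defined by `f_1 ↦ f_1 + z`, `f_i ↦ f_i` (`i ≥ 2`)
is a `G_a`-action whose ring of invariants is exactly `k[f_2,…,f_m]`. -/
theorem gaAction_of_coords {k : Type*} [Field k] [CharZero k] {m : ℕ} (hm : 0 < m)
    (f : Fin m → MvPolynomial (Fin m) k)
    (hgen : Algebra.adjoin k (Set.range f) = ⊤)
    (σ : MvPolynomial (Fin m) k →ₐ[k] Polynomial (MvPolynomial (Fin m) k))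
    (hσ1 : σ (f ⟨0, hm⟩) = Polynomial.C (f ⟨0, hm⟩) + Polynomial.X)
    (hσ2 : ∀ i : Fin m, i ≠ ⟨0, hm⟩ → σ (f i) = Polynomial.C (f i)) :
    IsGaAction σ ∧
    ∀ p : MvPolynomial (Fin m) k, σ p ∈ Set.range Polynomial.C ↔
      p ∈ Algebra.adjoin k {q | ∃ i : Fin m, i ≠ ⟨0, hm⟩ ∧ q = f i} := by
  
  classical
  constructor
  · constructor
    · -- counit axiom
      have h1 : (((Polynomial.aeval (0 : MvPolynomial (Fin m) k)).restrictScalars k).comp σ)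
          = AlgHom.id k _ := by
        apply algHom_ext_of_gen hgen
        rintro _ ⟨i, rfl⟩
        by_cases hi : i = ⟨0, hm⟩
        · subst hi; simp [hσ1]
        · simp [hσ2 i hi]
      intro p
      have h2 := AlgHom.congr_fun h1 p
      simpa [Polynomial.coe_aeval_eq_eval] using h2
    · -- coassociativity axiom
      set L : MvPolynomial (Fin m) k →ₐ[k] Polynomial (Polynomial (MvPolynomial (Fin m) k)) :=
        AlgHom.mk ((Polynomial.eval₂RingHom (S := Polynomial (Polynomial (MvPolynomial (Fin m) k)))
          (Polynomial.C.comp σ.toRingHom :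
          MvPolynomial (Fin m) k →+* Polynomial (Polynomial (MvPolynomial (Fin m) k))) Polynomial.X).comp
          σ.toRingHom) (fun r => by
            simp [Polynomial.algebraMap_apply, MvPolynomial.algebraMap_eq]) with hL
      set Rh : MvPolynomial (Fin m) k →ₐ[k] Polynomial (Polynomial (MvPolynomial (Fin m) k)) :=
        AlgHom.mk ((Polynomial.eval₂RingHom (S := Polynomial (Polynomial (MvPolynomial (Fin m) k)))
          (Polynomial.C.comp Polynomial.C :
            MvPolynomial (Fin m) k →+* Polynomial (Polynomial (MvPolynomial (Fin m) k)))
          (Polynomial.C Polynomial.X + Polynomial.X)).comp σ.toRingHom) (fun r => by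
            simp [Polynomial.algebraMap_apply, MvPolynomial.algebraMap_eq]) with hR
      have h1 : L = Rh := by
        apply algHom_ext_of_gen hgen
        rintro _ ⟨i, rfl⟩
        by_cases hi : i = ⟨0, hm⟩
        · subst hi
          simp only [hL, hR, AlgHom.coe_mk, RingHom.coe_comp, Function.comp_apply,
            Polynomial.coe_eval₂RingHom, AlgHom.toRingHom_eq_coe, RingHom.coe_coe, hσ1,
            Polynomial.eval₂_add, Polynomial.eval₂_C,
            Polynomial.eval₂_X, Polynomial.C_add, add_assoc]
        · simp only [hL, hR, AlgHom.coe_mk, RingHom.coe_comp, Function.comp_apply,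
            Polynomial.coe_eval₂RingHom, AlgHom.toRingHom_eq_coe, RingHom.coe_coe,
            hσ2 i hi, Polynomial.eval₂_C]
      intro p
      have h2 := AlgHom.congr_fun h1 p
      exact h2
  · intro p
    set i0 : Fin m := ⟨0, hm⟩
    set φ : MvPolynomial (Fin m) k →ₐ[k] MvPolynomial (Fin m) k := MvPolynomial.aeval f with hφ
    have hsurj : Function.Surjective φ := by
      rw [← AlgHom.range_eq_top, ← Algebra.adjoin_range_eq_range_aeval]
      exact hgen
    have hinj : Function.Injective φ := surj_endo_inj φ.toRingHom hsurj
    constructor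
    · rintro ⟨c, hc⟩
      set h : Fin m → Polynomial (MvPolynomial (Fin m) k) :=
        fun i => if i = i0 then Polynomial.C (X i0) + Polynomial.X else Polynomial.C (X i) with hh
      set s : Fin m → MvPolynomial (Fin m) k := fun i => if i = i0 then 0 else X i with hs
      have hcomp : σ.comp φ = (Polynomial.mapAlgHom φ).comp (MvPolynomial.aeval h) := by
        apply MvPolynomial.algHom_ext
        intro i
        by_cases hi : i = i0
        · subst hi
          simp [hh, hφ, hσ1, Polynomial.coe_mapAlgHom]
        · simp [hh, hφ, hσ2 i hi, hi, Polynomial.coe_mapAlgHom]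
      have hid : (((Polynomial.aeval (X i0 : MvPolynomial (Fin m) k)).restrictScalars k).comp
          (Polynomial.mapAlgHom (MvPolynomial.aeval s))).comp (MvPolynomial.aeval h)
          = AlgHom.id k (MvPolynomial (Fin m) k) := by
        apply MvPolynomial.algHom_ext
        intro i
        by_cases hi : i = i0
        · subst hi
          simp [hh, hs, Polynomial.coe_mapAlgHom]
        · simp [hh, hs, hi, Polynomial.coe_mapAlgHom]
      obtain ⟨P, hP⟩ := hsurj p
      obtain ⟨Q, hQ⟩ := hsurj c
      have key : MvPolynomial.aeval h P = Polynomial.C Q := by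
        apply Polynomial.map_injective
          (φ : MvPolynomial (Fin m) k →+* MvPolynomial (Fin m) k) hinj
        have e1 : Polynomial.map (φ : MvPolynomial (Fin m) k →+* _) (MvPolynomial.aeval h P)
            = σ (φ P) := by
          have := AlgHom.congr_fun hcomp P
          simpa [Polynomial.coe_mapAlgHom] using this.symm
        rw [e1, hP, ← hc, Polynomial.map_C]
        simp [hQ]
      have hPs : P = MvPolynomial.aeval s Q := by
        have := AlgHom.congr_fun hid P
        simp only [AlgHom.coe_comp, Function.comp_apply, AlgHom.id_apply] at this
        rw [key] at this
        simp only [AlgHom.coe_restrictScalars', Polynomial.coe_mapAlgHom, Polynomial.map_C,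
          Polynomial.aeval_C] at this
        simpa using this.symm
      have hQmem : MvPolynomial.aeval s Q ∈
          Algebra.adjoin k {q | ∃ i : Fin m, i ≠ i0 ∧ q = X i} := by
        have : MvPolynomial.aeval s Q ∈ Algebra.adjoin k (Set.range s) := by
          rw [Algebra.adjoin_range_eq_range_aeval]
          exact ⟨Q, rfl⟩
        refine Algebra.adjoin_le ?_ this
        rintro _ ⟨i, rfl⟩
        by_cases hi : i = i0
        · simp only [hs, if_pos hi]
          exact Subalgebra.zero_mem _
        · simp only [hs, if_neg hi]
          exact Algebra.subset_adjoin ⟨i, hi, rfl⟩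
      have : p ∈ (Algebra.adjoin k {q | ∃ i : Fin m, i ≠ i0 ∧ q = X i}).map φ :=
        ⟨MvPolynomial.aeval s Q, hQmem, by rw [← hPs]; exact hP⟩
      rw [AlgHom.map_adjoin] at this
      refine Algebra.adjoin_mono ?_ this
      rintro _ ⟨_, ⟨i, hi, rfl⟩, rfl⟩
      exact ⟨i, hi, by simp [hφ]⟩
    · intro hp
      have hsub : Algebra.adjoin k {q | ∃ i : Fin m, i ≠ i0 ∧ q = f i} ≤
          Subalgebra.comap σ ((Algebra.ofId (MvPolynomial (Fin m) k)
            (Polynomial (MvPolynomial (Fin m) k))).range.restrictScalars k) := by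
        apply Algebra.adjoin_le
        rintro _ ⟨i, hi, rfl⟩
        exact ⟨f i, by simp [Algebra.ofId_apply, hσ2 i hi, Polynomial.algebraMap_apply]⟩
      obtain ⟨c, hc⟩ := hsub hp
      exact ⟨c, by simpa [Algebra.ofId_apply, Polynomial.algebraMap_apply] using hc⟩
end

section
/- Let k be a field of characteristic zero and n ≥ 2. Suppose that for every G_a-action on k[x_1,...,x_n] with A := k[x_1,x_2] ∩ (invariant ring) not equal to k or to k[x_1,x_2], there exists a coordinate g of k[x_1,x_2] with A = k[g]. Then every stable G_a-invariant f of k[x_1,x_2] with f ∉ k is an invariant for some nontrivial G_a-action on k[x_1,x_2]. -/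
open MvPolynomial


theorem aux_inj {S R : Type*} [CommRing S] [CommRing R] [Algebra S R] [IsNoetherianRing R]
    (φ : R →ₐ[S] R) (hφ : Function.Surjective φ) : Function.Injective φ := by
  have hsurj : ∀ n : ℕ, Function.Surjective (φ ^ n : R →ₐ[S] R) := by
    intro n
    induction n with
    | zero => exact fun x => ⟨x, rfl⟩
    | succ n ih =>
      rw [pow_succ]
      exact fun x => by obtain ⟨y, hy⟩ := ih x; obtain ⟨z, hz⟩ := hφ y
                        exact ⟨z, by simp [AlgHom.mul_apply, hz, hy]⟩
  set K : ℕ →o Ideal R :=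
    ⟨fun n => RingHom.ker (φ ^ n : R →ₐ[S] R), by
      intro a b hab x hx
      obtain ⟨c, rfl⟩ := Nat.exists_eq_add_of_le hab
      have : (φ ^ (a + c)) x = (φ ^ c) ((φ ^ a) x) := by
        rw [add_comm, pow_add, AlgHom.mul_apply]
      simp only [RingHom.mem_ker] at hx ⊢
      rw [this, hx, map_zero]⟩ with hK
  obtain ⟨n, hn⟩ := monotone_stabilizes_iff_noetherian.mpr inferInstance K
  rw [injective_iff_map_eq_zero]
  intro a ha
  obtain ⟨b, hb⟩ := hsurj n a
  have hb1 : b ∈ K (n + 1) := by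
    simp only [hK, RingHom.mem_ker, OrderHom.coe_mk]
    show (φ ^ (n + 1)) b = 0; rw [pow_succ']
    show φ ((φ ^ n) b) = 0
    rw [hb, ha]
  rw [← hn (n + 1) (Nat.le_succ n)] at hb1
  have : (φ ^ n) b = 0 := hb1
  rw [← hb, this]


noncomputable def sigma0 (k : Type*) [CommRing k] :
    MvPolynomial (Fin 2) k →ₐ[k] Polynomial (MvPolynomial (Fin 2) k) :=
  aeval ![Polynomial.C (X 0), Polynomial.C (X 1) + Polynomial.X]

theorem sigma0_isGaAction (k : Type*) [CommRing k] : IsGaAction (sigma0 k) := by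
  constructor
  · intro f
    have : (Polynomial.evalRingHom (0 : MvPolynomial (Fin 2) k)).comp (sigma0 k).toRingHom
        = RingHom.id _ := by
      apply MvPolynomial.ringHom_ext
      · intro r; simp [sigma0]
      · intro i
        fin_cases i <;> simp [sigma0]
    exact congrFun (congrArg (↑·) this) f
  · intro f
    have : (Polynomial.eval₂RingHom
            (S := Polynomial (Polynomial (MvPolynomial (Fin 2) k)))
            (Polynomial.C.comp (sigma0 k).toRingHom)
          Polynomial.X).comp (sigma0 k).toRingHom
        = (Polynomial.eval₂RingHom
            (S := Polynomial (Polynomial (MvPolynomial (Fin 2) k)))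
            (Polynomial.C.comp Polynomial.C)
          (Polynomial.C Polynomial.X + Polynomial.X)).comp (sigma0 k).toRingHom := by
      apply MvPolynomial.ringHom_ext
      · intro r; simp [sigma0]
      · intro i
        fin_cases i <;> simp [sigma0, add_assoc]
    exact congrFun (congrArg (↑·) this) f

theorem conj_isGaAction {k : Type*} [CommRing k] {m : ℕ}
    (σ : MvPolynomial (Fin m) k →ₐ[k] Polynomial (MvPolynomial (Fin m) k))
    (hσ : IsGaAction σ) (φ : MvPolynomial (Fin m) k ≃ₐ[k] MvPolynomial (Fin m) k) :
    IsGaAction ((Polynomial.mapAlgHom φ.toAlgHom).comp (σ.comp φ.symm.toAlgHom)) := by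
  set σ' := (Polynomial.mapAlgHom φ.toAlgHom).comp (σ.comp φ.symm.toAlgHom) with hσ'
  have happ : ∀ f, σ' f = Polynomial.map (φ : MvPolynomial (Fin m) k →+* MvPolynomial (Fin m) k)
      (σ (φ.symm f)) := fun f => rfl
  constructor
  · intro f
    rw [happ, Polynomial.eval_map, Polynomial.eval₂_at_zero,
      Polynomial.coeff_zero_eq_eval_zero, hσ.1]
    exact φ.apply_symm_apply f
  · intro f
    rw [happ]
    set ψ : Polynomial (Polynomial (MvPolynomial (Fin m) k)) →+* Polynomial (Polynomial (MvPolynomial (Fin m) k)) :=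
      Polynomial.mapRingHom (Polynomial.mapRingHom (φ : MvPolynomial (Fin m) k →+* MvPolynomial (Fin m) k))
    have key1 : (Polynomial.C.comp σ'.toRingHom).comp
        (φ : MvPolynomial (Fin m) k →+* MvPolynomial (Fin m) k)
        = ψ.comp (Polynomial.C.comp σ.toRingHom) := by
      ext q
      · simp [happ, ψ]
      · simp [happ, ψ]
    have key2 : ((Polynomial.C.comp Polynomial.C).comp
        (φ : MvPolynomial (Fin m) k →+* MvPolynomial (Fin m) k))
        = ψ.comp (Polynomial.C.comp Polynomial.C) := by
      ext q
      · simp [ψ]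
      · simp [ψ]
    have hψX : ψ Polynomial.X = Polynomial.X := by simp [ψ]
    have hψB : ψ (Polynomial.C Polynomial.X + Polynomial.X)
        = Polynomial.C Polynomial.X + Polynomial.X := by simp [ψ]
    rw [Polynomial.eval₂_map, key1, ← hψX, ← Polynomial.hom_eval₂, hσ.2,
      Polynomial.hom_eval₂, hψB, ← key2, ← Polynomial.eval₂_map, hψX]

/-- `f` is a coordinate of `k[x_1,…,x_m]`: there are `f_2,…,f_m` with
`k[f,f_2,…,f_m] = k[x_1,…,x_m]`. -/
def IsCoordinate {k : Type*} [CommRing k] {m : ℕ} (f : MvPolynomial (Fin m) k) : Prop :=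
  ∃ g : Fin (m - 1) → MvPolynomial (Fin m) k,
    Algebra.adjoin k (insert f (Set.range g)) = ⊤

/-- Every stable `G_a`-invariant of `k[x_1,x_2]` not in `k` is an invariant of a
nontrivial `G_a`-action on `k[x_1,x_2]`, granted that for every `G_a`-action on
`k[x_1,…,x_n]` whose invariant ring meets `k[x_1,x_2]` in a subalgebra `A` different
from `k` and from `k[x_1,x_2]`, one has `A = k[g]` for some coordinate `g`. -/
theorem stableInvariant_is_invariant {k : Type*} [Field k] [CharZero k]
    (H : ∀ (n : ℕ) (h2 : 2 ≤ n)
      (σ : MvPolynomial (Fin n) k →ₐ[k] Polynomial (MvPolynomial (Fin n) k)),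
      IsGaAction σ →
      (∃ p : MvPolynomial (Fin 2) k,
        σ (rename (Fin.castLE h2) p) ∈ Set.range Polynomial.C ∧
        p ∉ Set.range (MvPolynomial.C : k → MvPolynomial (Fin 2) k)) →
      (∃ p : MvPolynomial (Fin 2) k,
        σ (rename (Fin.castLE h2) p) ∉ Set.range Polynomial.C) →
      ∃ g : MvPolynomial (Fin 2) k, IsCoordinate g ∧
        ∀ p : MvPolynomial (Fin 2) k,
          σ (rename (Fin.castLE h2) p) ∈ Set.range Polynomial.C ↔
          p ∈ Algebra.adjoin k {g})
    (f : MvPolynomial (Fin 2) k) (hf : IsStableGaInvariant f)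
    (hfk : f ∉ Set.range (MvPolynomial.C : k → MvPolynomial (Fin 2) k)) :
    ∃ σ : MvPolynomial (Fin 2) k →ₐ[k] Polynomial (MvPolynomial (Fin 2) k),
      IsGaAction σ ∧ (∃ p, σ p ∉ Set.range Polynomial.C) ∧
      σ f ∈ Set.range Polynomial.C := by
  obtain ⟨m, hm, σm, hGa, hfC, hnt⟩ := hf
  push_neg at hnt
  obtain ⟨g, hgcoord, hginv⟩ := H m hm σm hGa ⟨f, hfC, hfk⟩ hnt
  obtain ⟨g', hg'⟩ := hgcoord
  set φ0 : MvPolynomial (Fin 2) k →ₐ[k] MvPolynomial (Fin 2) k := aeval ![g, g' 0] with hφ0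
  have hsurj : Function.Surjective φ0 := by
    have htop : ⊤ ≤ φ0.range := by
      rw [← hg']
      apply Algebra.adjoin_le
      intro x hx
      rcases Set.mem_insert_iff.mp hx with rfl | ⟨j, rfl⟩
      · exact ⟨X 0, by simp [hφ0]⟩
      · fin_cases j
        exact ⟨X 1, by simp [hφ0]⟩
    exact fun x => htop (Algebra.mem_top)
  have hinj : Function.Injective φ0 := aux_inj φ0 hsurj
  set φ : MvPolynomial (Fin 2) k ≃ₐ[k] MvPolynomial (Fin 2) k :=
    AlgEquiv.ofBijective φ0 ⟨hinj, hsurj⟩ with hφ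
  set σ' := (Polynomial.mapAlgHom φ.toAlgHom).comp ((sigma0 k).comp φ.symm.toAlgHom) with hσ'
  have happ : ∀ p, σ' p = Polynomial.map
      (φ : MvPolynomial (Fin 2) k →+* MvPolynomial (Fin 2) k) (sigma0 k (φ.symm p)) :=
    fun p => rfl
  have hφapp : ∀ p, φ p = φ0 p := fun p => rfl
  refine ⟨σ', conj_isGaAction (sigma0 k) (sigma0_isGaAction k) φ, ⟨φ0 (X 1), ?_⟩, ?_⟩
  · have h1 : φ.symm (φ0 (X 1)) = X 1 := by
      rw [← hφapp, AlgEquiv.symm_apply_apply]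
    rw [happ, h1]
    have h2 : sigma0 k (X 1) = Polynomial.C (X 1) + Polynomial.X := by simp [sigma0]
    rw [h2]
    rintro ⟨b, hb⟩
    have := congrArg (fun p => Polynomial.coeff p 1) hb
    simp [Polynomial.coeff_C] at this
  · have hfg : f ∈ Algebra.adjoin k {g} := (hginv f).mp hfC
    rw [Algebra.adjoin_singleton_eq_range_aeval] at hfg
    obtain ⟨q, hq⟩ := hfg
    replace hq : Polynomial.aeval g q = f := hq
    have hg0 : φ (X 0) = g := by rw [hφapp]; simp [hφ0]
    have hσg : σ' g = Polynomial.C g := by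
      rw [happ]
      rw [← hg0, AlgEquiv.symm_apply_apply]
      simp [sigma0, hg0]
    refine ⟨f, ?_⟩
    rw [← hq, ← Polynomial.aeval_algHom_apply σ' g q, hσg]
    exact (Polynomial.aeval_algHom_apply Polynomial.CAlgHom g q).symm
end
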